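/- arXiv:1703.04806 — 3 statements merged into one kernel-verified Lean document; each statement's English description precedes it below -/
import Mathlib

section
/- Let T₁ = (S₁,Σ₁,κ₁) be an STS, T₂ = (S₂,2^{S₂},κ₂) a denumerable Markov chain (S₂ countable), and α : S₁ → S₂ measurable, with T₂ an α-abstraction of T₁. Assume: (1) there is a finite set A₂ = {s₁,…,s_n} ⊆ S₂ such that A₂ is an attractor for T₂ and α⁻¹(A₂) is an attractor for T₁; and (2) for every 1 ≤ i ≤ n and every B ⊆ S₂, there exist p > 0 and k ∈ ℕ such that either Prob^{T₁}_μ(F≤k α⁻¹(B)) ≥ p for every probability measure μ on S₁ with μ(α⁻¹({s_i})) = 1, or Prob^{T₁}_μ(F α⁻¹(B)) = 0 for every such μ. Then T₁ is decisive w.r.t. every α-closed set α⁻¹(B) (B ⊆ S₂) from every initial probability measure on S₁. -/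
open MeasureTheory ProbabilityTheory ENNReal Filter Topology

namespace STS

variable {S : Type*} [MeasurableSpace S]

/-- Probability of the cylinder `Cyl(A 0, …, A n)` for the Markov chain with kernel `κ`
and initial distribution `μ`. -/
noncomputable def cylProb (κ : Kernel S S) : ℕ → Measure S → (ℕ → Set S) → ℝ≥0∞
  | 0, μ, A => μ (A 0)
  | n + 1, μ, A => ∫⁻ s in A 0, cylProb κ n (κ s) (fun i => A (i + 1)) ∂μ

/-- `P` assigns to each initial (probability) distribution the path measure (on `ℕ → S`,
with the product σ-algebra) of the time-homogeneous Markov chain with transition kernel `κ`,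
as given by the Ionescu–Tulcea construction: it is the unique probability measure giving
cylinders their prescribed probabilities. -/
def IsPathMeasure (κ : Kernel S S) (P : Measure S → Measure (ℕ → S)) : Prop :=
  ∀ μ : Measure S, IsProbabilityMeasure μ →
    IsProbabilityMeasure (P μ) ∧
    ∀ (n : ℕ) (A : ℕ → Set S), (∀ i, MeasurableSet (A i)) →
      P μ {ρ | ∀ i ≤ n, ρ i ∈ A i} = cylProb κ n μ A

/-- The path event `F B`: eventually reach `B`. -/
def evF (B : Set S) : Set (ℕ → S) := {ρ | ∃ k, ρ k ∈ B}

/-- The path event `F≤n B`. -/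
def evFle (n : ℕ) (B : Set S) : Set (ℕ → S) := {ρ | ∃ k ≤ n, ρ k ∈ B}

/-- The path event `F≥p B`. -/
def evFge (p : ℕ) (B : Set S) : Set (ℕ → S) := {ρ | ∃ k, p ≤ k ∧ ρ k ∈ B}

/-- The path event `GF B`: visit `B` infinitely often. -/
def evGF (B : Set S) : Set (ℕ → S) := {ρ | ∀ n, ∃ k, n ≤ k ∧ ρ k ∈ B}

/-- The path event `FG B`: eventually stay in `B` forever. -/
def evFG (B : Set S) : Set (ℕ → S) := {ρ | ∃ n, ∀ k, n ≤ k → ρ k ∈ B}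

/-- The until event `B' U B`. -/
def evU (B' B : Set S) : Set (ℕ → S) := {ρ | ∃ k, ρ k ∈ B ∧ ∀ j < k, ρ j ∈ B'}

/-- The bounded until event `B' U≤n B`. -/
def evUle (n : ℕ) (B' B : Set S) : Set (ℕ → S) := {ρ | ∃ k ≤ n, ρ k ∈ B ∧ ∀ j < k, ρ j ∈ B'}

/-- The avoid-set `B̃` of `B`: states from which `B` is reached with probability `0`. -/
def avoid (P : Measure S → Measure (ℕ → S)) (B : Set S) : Set S :=
  {s | P (Measure.dirac s) (evF B) = 0}

/-- `T` is decisive w.r.t. `B` from `μ`. -/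
def Decisive (P : Measure S → Measure (ℕ → S)) (μ : Measure S) (B : Set S) : Prop :=
  P μ (evF B ∪ evF (avoid P B)) = 1

/-- `T` is strongly decisive w.r.t. `B` from `μ`. -/
def StronglyDecisive (P : Measure S → Measure (ℕ → S)) (μ : Measure S) (B : Set S) : Prop :=
  P μ (evGF B ∪ evF (avoid P B)) = 1

/-- `T` is persistently decisive w.r.t. `B` from `μ`. -/
def PersistentlyDecisive (P : Measure S → Measure (ℕ → S)) (μ : Measure S) (B : Set S) : Prop :=
  ∀ p : ℕ, P μ (evFge p B ∪ evFge p (avoid P B)) = 1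

/-- `PreProb(B)`: measurable sets `B'` from which `B` is reached in one step with positive
probability, whatever the initial distribution concentrated on `B'`. -/
def PreProb (P : Measure S → Measure (ℕ → S)) (B : Set S) : Set (Set S) :=
  {B' | MeasurableSet B' ∧ ∀ μ' : Measure S, IsProbabilityMeasure μ' → μ' B' = 1 →
    0 < P μ' {ρ | ρ 0 ∈ B' ∧ ρ 1 ∈ B}}

/-- `T` is fair w.r.t. `B` from `μ`. -/
def Fair (P : Measure S → Measure (ℕ → S)) (μ : Measure S) (B : Set S) : Prop :=
  ∀ B' ∈ PreProb P B, 0 < P μ (evGF B') →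
    P μ (evGF B ∩ evGF B') = P μ (evGF B')

/-- The one-step measure transformer `Ω_T`. -/
noncomputable def Omega (κ : Kernel S S) (μ : Measure S) : Measure S :=
  μ.bind (fun s => κ s)

/-- Two measures are qualitatively equivalent if they have the same null (measurable) sets. -/
def QualEquiv {T : Type*} [MeasurableSpace T] (μ ν : Measure T) : Prop :=
  ∀ A : Set T, MeasurableSet A → (μ A = 0 ↔ ν A = 0)

/-- `T₂ = (S₂,κ₂)` is an `α`-abstraction of `T₁ = (S₁,κ₁)`. -/
def IsAbstraction {S₁ S₂ : Type*} [MeasurableSpace S₁] [MeasurableSpace S₂]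
    (κ₁ : Kernel S₁ S₁) (κ₂ : Kernel S₂ S₂) (α : S₁ → S₂) : Prop :=
  ∀ μ : Measure S₁, IsProbabilityMeasure μ →
    QualEquiv (Measure.map α (Omega κ₁ μ)) (Omega κ₂ (Measure.map α μ))


set_option linter.unusedSectionVars false

/-- shift on paths -/
private def sh : (ℕ → S) → (ℕ → S) := fun ρ i => ρ (i + 1)

private lemma measurable_sh : Measurable (sh (S := S)) :=
  measurable_pi_lambda _ fun _ => measurable_pi_apply _

private lemma sh_iterate (m : ℕ) (ρ : ℕ → S) (j : ℕ) : sh^[m] ρ j = ρ (j + m) := by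
  induction m generalizing ρ j with
  | zero => rfl
  | succ n ih =>
    rw [Function.iterate_succ_apply, ih]
    rfl

private def cylSet (S : Type*) [MeasurableSpace S] : Set (Set (ℕ → S)) :=
  {t | ∃ n, ∃ A : ℕ → Set S, (∀ i, MeasurableSet (A i)) ∧ t = {ρ | ∀ i ≤ n, ρ i ∈ A i}}

private lemma measurableSet_cylPrefix {n : ℕ} {A : ℕ → Set S} (hA : ∀ i, MeasurableSet (A i)) :
    MeasurableSet {ρ : ℕ → S | ∀ i ≤ n, ρ i ∈ A i} := by
  have h : {ρ : ℕ → S | ∀ i ≤ n, ρ i ∈ A i} = ⋂ i ∈ {i : ℕ | i ≤ n}, (fun ρ : ℕ → S => ρ i) ⁻¹' A i := by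
    ext ρ; simp
  rw [h]
  exact MeasurableSet.biInter (Set.to_countable _) fun i _ => (measurable_pi_apply i) (hA i)

private lemma measurableSet_ltPrefix {n : ℕ} {A : ℕ → Set S} (hA : ∀ i, MeasurableSet (A i)) :
    MeasurableSet {ρ : ℕ → S | ∀ i < n, ρ i ∈ A i} := by
  have h : {ρ : ℕ → S | ∀ i < n, ρ i ∈ A i} = ⋂ i ∈ {i : ℕ | i < n}, (fun ρ : ℕ → S => ρ i) ⁻¹' A i := by
    ext ρ; simp
  rw [h]
  exact MeasurableSet.biInter (Set.to_countable _) fun i _ => (measurable_pi_apply i) (hA i)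

private lemma pi_eq_generateFrom :
    (inferInstance : MeasurableSpace (ℕ → S)) = MeasurableSpace.generateFrom (cylSet S) := by
  apply le_antisymm
  · show MeasurableSpace.pi ≤ _
    refine iSup_le fun i => ?_
    rw [MeasurableSpace.comap_le_iff_le_map]
    intro A hA
    apply MeasurableSpace.measurableSet_generateFrom
    refine ⟨i, fun j => if j = i then A else Set.univ, ?_, ?_⟩
    · intro j; by_cases h : j = i <;> simp [h, hA]
    · show (fun ρ : ℕ → S => ρ i) ⁻¹' A = _
      ext ρ
      simp only [Set.mem_preimage, Set.mem_setOf_eq]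
      constructor
      · intro hρ j hj
        by_cases h : j = i <;> simp [h, hρ]
      · intro h
        have := h i le_rfl
        simpa using this
  · refine MeasurableSpace.generateFrom_le ?_
    rintro t ⟨n, A, hA, rfl⟩
    exact measurableSet_cylPrefix hA

private lemma isPiSystem_cylSet : IsPiSystem (cylSet S) := by
  rintro t₁ ⟨n, A, hA, rfl⟩ t₂ ⟨m, A', hA', rfl⟩ -
  refine ⟨max n m, fun i => (if i ≤ n then A i else Set.univ) ∩ (if i ≤ m then A' i else Set.univ),
    ?_, ?_⟩
  · intro i
    refine MeasurableSet.inter ?_ ?_ <;> split_ifs <;> first | exact hA _ | exact hA' _ | exact MeasurableSet.univ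
  · ext ρ
    simp only [Set.mem_inter_iff, Set.mem_setOf_eq]
    constructor
    · rintro ⟨h1, h2⟩ i hi
      constructor
      · by_cases h : i ≤ n <;> simp [h, h1 i]
      · by_cases h : i ≤ m <;> simp [h, h2 i]
    · intro h
      constructor
      · intro i hi
        have := (h i (le_trans hi (le_max_left n m))).1
        simpa [hi] using this
      · intro i hi
        have := (h i (le_trans hi (le_max_right n m))).2
        simpa [hi] using this

private lemma measurable_cylProb (κ : Kernel S S) :
    ∀ (n : ℕ) (A : ℕ → Set S), (∀ i, MeasurableSet (A i)) →
      Measurable fun μ : Measure S => cylProb κ n μ A := by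
  intro n
  induction n with
  | zero => intro A hA; exact Measure.measurable_coe (hA 0)
  | succ n ih =>
    intro A hA
    have hg : Measurable fun s => cylProb κ n (κ s) (fun i => A (i + 1)) :=
      (ih _ fun i => hA (i + 1)).comp (Kernel.measurable κ)
    have h : ∀ μ : Measure S, cylProb κ (n + 1) μ A
        = ∫⁻ s, (A 0).indicator (fun s => cylProb κ n (κ s) fun i => A (i + 1)) s ∂μ := by
      intro μ
      rw [lintegral_indicator (hA 0)]
      rfl
    simp only [h]
    exact Measure.measurable_lintegral (hg.indicator (hA 0))

private lemma cylProb_lintegral_dirac (κ : Kernel S S) [IsMarkovKernel κ] (n : ℕ)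
    (A : ℕ → Set S) (hA : ∀ i, MeasurableSet (A i)) (μ : Measure S) :
    cylProb κ n μ A = ∫⁻ s, cylProb κ n (Measure.dirac s) A ∂μ := by
  classical
  cases n with
  | zero =>
    show μ (A 0) = ∫⁻ s, Measure.dirac s (A 0) ∂μ
    have h : ∀ s : S, Measure.dirac s (A 0) = (A 0).indicator 1 s := fun s =>
      Measure.dirac_apply' s (hA 0)
    simp only [h]
    rw [lintegral_indicator (hA 0)]
    simp
  | succ n =>
    have hg : Measurable fun s => cylProb κ n (κ s) (fun i => A (i + 1)) :=
      (measurable_cylProb κ n _ fun i => hA (i + 1)).comp (Kernel.measurable κ)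
    show (∫⁻ s in A 0, cylProb κ n (κ s) (fun i => A (i + 1)) ∂μ)
      = ∫⁻ s, (∫⁻ t in A 0, cylProb κ n (κ t) (fun i => A (i + 1)) ∂(Measure.dirac s)) ∂μ
    have h : ∀ s : S, (∫⁻ t in A 0, cylProb κ n (κ t) (fun i => A (i + 1)) ∂(Measure.dirac s))
        = (A 0).indicator (fun t => cylProb κ n (κ t) fun i => A (i + 1)) s := by
      intro s
      rw [setLIntegral_dirac' hg (hA 0)]
      simp [Set.indicator_apply]
    simp only [h]
    rw [lintegral_indicator (hA 0)]

private lemma onestep (κ : Kernel S S) [IsMarkovKernel κ] (P : Measure S → Measure (ℕ → S))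
    (hP : IsPathMeasure κ P) :
    ∀ ⦃E : Set (ℕ → S)⦄, MeasurableSet E →
      Measurable (fun s => P (κ s) E) ∧
      ∀ (μ : Measure S), IsProbabilityMeasure μ → ∀ (A₀ : Set S), MeasurableSet A₀ →
        P μ {ρ | ρ 0 ∈ A₀ ∧ sh ρ ∈ E} = ∫⁻ s in A₀, P (κ s) E ∂μ := by
  have hcyl0 : ∀ (μ : Measure S), IsProbabilityMeasure μ → ∀ (A₀ : Set S), MeasurableSet A₀ →
      P μ {ρ : ℕ → S | ρ 0 ∈ A₀} = μ A₀ := by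
    intro μ hμ A₀ hA₀
    have h := (hP μ hμ).2 0 (fun _ => A₀) (fun _ => hA₀)
    have hs : {ρ : ℕ → S | ∀ i ≤ 0, ρ i ∈ (fun _ => A₀) i} = {ρ : ℕ → S | ρ 0 ∈ A₀} := by
      ext ρ; simp [Nat.le_zero]
    rw [hs] at h
    simpa [cylProb] using h
  refine MeasurableSpace.induction_on_inter pi_eq_generateFrom isPiSystem_cylSet ?_ ?_ ?_ ?_
  · constructor
    · simp only [measure_empty]; exact measurable_const
    · intro μ hμ A₀ hA₀
      have hs : {ρ : ℕ → S | ρ 0 ∈ A₀ ∧ sh ρ ∈ (∅ : Set (ℕ → S))} = ∅ := by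
        ext ρ; simp
      simp [hs]
  · rintro t ⟨n, A, hA, rfl⟩
    constructor
    · have h : ∀ s, P (κ s) {ρ | ∀ i ≤ n, ρ i ∈ A i} = cylProb κ n (κ s) A := fun s =>
        (hP (κ s) inferInstance).2 n A hA
      simp only [h]
      exact (measurable_cylProb κ n A hA).comp (Kernel.measurable κ)
    · intro μ hμ A₀ hA₀
      classical
      have hA''m : ∀ i, MeasurableSet ((fun i => Nat.casesOn i A₀ A : ℕ → Set S) i) := by
        intro i; cases i with
        | zero => exact hA₀
        | succ j => exact hA j
      have hset : {ρ : ℕ → S | ρ 0 ∈ A₀ ∧ sh ρ ∈ {ρ | ∀ i ≤ n, ρ i ∈ A i}}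
          = {ρ : ℕ → S | ∀ i ≤ n + 1, ρ i ∈ (fun i => Nat.casesOn i A₀ A : ℕ → Set S) i} := by
        ext ρ
        simp only [Set.mem_setOf_eq]
        constructor
        · rintro ⟨h0, hrest⟩ i hi
          cases i with
          | zero => exact h0
          | succ j => exact hrest j (by omega)
        · intro h
          exact ⟨h 0 (by omega), fun j hj => h (j + 1) (by omega)⟩
      rw [hset, (hP μ hμ).2 (n + 1) _ hA''m]
      show (∫⁻ s in A₀, cylProb κ n (κ s) A ∂μ) = _
      exact lintegral_congr fun s => ((hP (κ s) inferInstance).2 n A hA).symm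
  · rintro t ht ⟨ihm, ih⟩
    have hcompl : ∀ s, P (κ s) tᶜ = 1 - P (κ s) t := by
      intro s
      have := (hP (κ s) inferInstance).1
      exact prob_compl_eq_one_sub ht
    have hle1 : ∀ s, P (κ s) t ≤ 1 := by
      intro s
      have := (hP (κ s) inferInstance).1
      exact prob_le_one
    constructor
    · simp only [hcompl]
      exact measurable_const.sub ihm
    · intro μ hμ A₀ hA₀
      have := (hP μ hμ).1
      have hXm : MeasurableSet {ρ : ℕ → S | ρ 0 ∈ A₀} := (measurable_pi_apply 0) hA₀
      have hYm : MeasurableSet {ρ : ℕ → S | ρ 0 ∈ A₀ ∧ sh ρ ∈ t} := hXm.inter (measurable_sh ht)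
      have h1 : {ρ : ℕ → S | ρ 0 ∈ A₀ ∧ sh ρ ∈ tᶜ}
          = {ρ : ℕ → S | ρ 0 ∈ A₀} \ {ρ : ℕ → S | ρ 0 ∈ A₀ ∧ sh ρ ∈ t} := by
        ext ρ
        simp only [Set.mem_setOf_eq, Set.mem_diff, Set.mem_compl_iff]
        tauto
      have hfin : (∫⁻ s in A₀, P (κ s) t ∂μ) ≠ ∞ := by
        have hb : (∫⁻ s in A₀, P (κ s) t ∂μ) ≤ ∫⁻ _ in A₀, 1 ∂μ := lintegral_mono hle1
        rw [setLIntegral_one] at hb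
        exact ne_top_of_le_ne_top (by simp [measure_ne_top]) hb
      have hsub : {ρ : ℕ → S | ρ 0 ∈ A₀ ∧ sh ρ ∈ t} ⊆ {ρ : ℕ → S | ρ 0 ∈ A₀} :=
        fun ρ hρ => hρ.1
      rw [h1, measure_diff hsub hYm.nullMeasurableSet (measure_ne_top _ _),
        hcyl0 μ hμ A₀ hA₀, ih μ hμ A₀ hA₀]
      have h2 : (∫⁻ s in A₀, P (κ s) tᶜ ∂μ) = ∫⁻ s in A₀, 1 - P (κ s) t ∂μ :=
        lintegral_congr fun s => hcompl s
      rw [h2, lintegral_sub ihm hfin (Filter.Eventually.of_forall hle1), setLIntegral_one]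
  · intro f hdisj hmeas ih
    have hsum : ∀ s, P (κ s) (⋃ i, f i) = ∑' i, P (κ s) (f i) := fun s =>
      measure_iUnion hdisj hmeas
    constructor
    · simp only [hsum]
      exact Measurable.ennreal_tsum fun i => (ih i).1
    · intro μ hμ A₀ hA₀
      have hXm : MeasurableSet {ρ : ℕ → S | ρ 0 ∈ A₀} := (measurable_pi_apply 0) hA₀
      have h1 : {ρ : ℕ → S | ρ 0 ∈ A₀ ∧ sh ρ ∈ ⋃ i, f i}
          = ⋃ i, {ρ : ℕ → S | ρ 0 ∈ A₀ ∧ sh ρ ∈ f i} := by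
        ext ρ
        simp only [Set.mem_setOf_eq, Set.mem_iUnion]
        tauto
      rw [h1, measure_iUnion ?_ ?_]
      · have h2 : ∀ i, P μ {ρ : ℕ → S | ρ 0 ∈ A₀ ∧ sh ρ ∈ f i} = ∫⁻ s in A₀, P (κ s) (f i) ∂μ :=
          fun i => (ih i).2 μ hμ A₀ hA₀
        simp only [h2]
        rw [← lintegral_tsum fun i => ((ih i).1).aemeasurable]
        exact lintegral_congr fun s => (hsum s).symm
      · intro i j hij
        refine Set.disjoint_left.2 fun ρ h1 h2 => ?_
        exact Set.disjoint_left.1 (hdisj hij) h1.2 h2.2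
      · exact fun i => hXm.inter (measurable_sh (hmeas i))

private lemma aff (κ : Kernel S S) [IsMarkovKernel κ] (P : Measure S → Measure (ℕ → S))
    (hP : IsPathMeasure κ P) :
    ∀ ⦃E : Set (ℕ → S)⦄, MeasurableSet E →
      Measurable (fun s => P (Measure.dirac s) E) ∧
      ∀ (μ : Measure S), IsProbabilityMeasure μ →
        P μ E = ∫⁻ s, P (Measure.dirac s) E ∂μ := by
  refine MeasurableSpace.induction_on_inter pi_eq_generateFrom isPiSystem_cylSet ?_ ?_ ?_ ?_
  · constructor
    · simp only [measure_empty]; exact measurable_const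
    · intro μ hμ; simp
  · rintro t ⟨n, A, hA, rfl⟩
    have h : ∀ s : S, P (Measure.dirac s) {ρ | ∀ i ≤ n, ρ i ∈ A i}
        = cylProb κ n (Measure.dirac s) A := fun s =>
      (hP (Measure.dirac s) inferInstance).2 n A hA
    constructor
    · simp only [h]
      exact (measurable_cylProb κ n A hA).comp Measure.measurable_dirac
    · intro μ hμ
      rw [(hP μ hμ).2 n A hA, cylProb_lintegral_dirac κ n A hA μ]
      exact lintegral_congr fun s => (h s).symm
  · rintro t ht ⟨ihm, ih⟩
    have hcompl : ∀ s : S, P (Measure.dirac s) tᶜ = 1 - P (Measure.dirac s) t := by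
      intro s
      have := (hP (Measure.dirac s) inferInstance).1
      exact prob_compl_eq_one_sub ht
    have hle1 : ∀ s : S, P (Measure.dirac s) t ≤ 1 := by
      intro s
      have := (hP (Measure.dirac s) inferInstance).1
      exact prob_le_one
    constructor
    · simp only [hcompl]
      exact measurable_const.sub ihm
    · intro μ hμ
      have := (hP μ hμ).1
      have hfin : (∫⁻ s, P (Measure.dirac s) t ∂μ) ≠ ∞ := by
        have hb : (∫⁻ s, P (Measure.dirac s) t ∂μ) ≤ ∫⁻ _, 1 ∂μ := lintegral_mono hle1
        rw [lintegral_one, measure_univ] at hb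
        exact ne_top_of_le_ne_top one_ne_top hb
      have h2 : (∫⁻ s, P (Measure.dirac s) tᶜ ∂μ) = ∫⁻ s, 1 - P (Measure.dirac s) t ∂μ :=
        lintegral_congr fun s => hcompl s
      rw [prob_compl_eq_one_sub ht, ih μ hμ, h2,
        lintegral_sub ihm hfin (Filter.Eventually.of_forall hle1), lintegral_one, measure_univ]
  · intro f hdisj hmeas ih
    have hsum : ∀ s : S, P (Measure.dirac s) (⋃ i, f i) = ∑' i, P (Measure.dirac s) (f i) :=
      fun s => measure_iUnion hdisj hmeas
    constructor
    · simp only [hsum]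
      exact Measurable.ennreal_tsum fun i => (ih i).1
    · intro μ hμ
      rw [measure_iUnion hdisj hmeas]
      have h2 : ∀ i, P μ (f i) = ∫⁻ s, P (Measure.dirac s) (f i) ∂μ := fun i => (ih i).2 μ hμ
      simp only [h2]
      rw [← lintegral_tsum fun i => ((ih i).1).aemeasurable]
      exact lintegral_congr fun s => (hsum s).symm

private lemma P_eval_zero (κ : Kernel S S) [IsMarkovKernel κ] (P : Measure S → Measure (ℕ → S))
    (hP : IsPathMeasure κ P) (μ : Measure S) (hμ : IsProbabilityMeasure μ)
    (A₀ : Set S) (hA₀ : MeasurableSet A₀) :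
    P μ {ρ : ℕ → S | ρ 0 ∈ A₀} = μ A₀ := by
  have h := (hP μ hμ).2 0 (fun _ => A₀) (fun _ => hA₀)
  have hs : {ρ : ℕ → S | ∀ i ≤ 0, ρ i ∈ (fun _ => A₀) i} = {ρ : ℕ → S | ρ 0 ∈ A₀} := by
    ext ρ; simp [Nat.le_zero]
  rw [hs] at h
  simpa [cylProb] using h

private lemma measurable_Pdirac (κ : Kernel S S) [IsMarkovKernel κ]
    (P : Measure S → Measure (ℕ → S)) (hP : IsPathMeasure κ P) :
    Measurable fun s : S => P (Measure.dirac s) :=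
  Measure.measurable_of_measurable_coe _ fun _ hE => (aff κ P hP hE).1

private lemma measurable_Pkernel (κ : Kernel S S) [IsMarkovKernel κ]
    (P : Measure S → Measure (ℕ → S)) (hP : IsPathMeasure κ P) :
    Measurable fun s : S => P (κ s) :=
  Measure.measurable_of_measurable_coe _ fun _ hE => (onestep κ P hP hE).1

private lemma map_sh (κ : Kernel S S) [IsMarkovKernel κ] (P : Measure S → Measure (ℕ → S))
    (hP : IsPathMeasure κ P) (μ : Measure S) (hμ : IsProbabilityMeasure μ)
    (A₀ : Set S) (hA₀ : MeasurableSet A₀) :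
    Measure.map sh ((P μ).restrict {ρ : ℕ → S | ρ 0 ∈ A₀})
      = (μ.restrict A₀).bind fun s => P (κ s) := by
  ext E hE
  rw [Measure.map_apply measurable_sh hE, Measure.restrict_apply (measurable_sh hE),
    Measure.bind_apply hE (measurable_Pkernel κ P hP).aemeasurable]
  have h : sh ⁻¹' E ∩ {ρ : ℕ → S | ρ 0 ∈ A₀} = {ρ : ℕ → S | ρ 0 ∈ A₀ ∧ sh ρ ∈ E} := by
    ext ρ
    simp only [Set.mem_inter_iff, Set.mem_preimage, Set.mem_setOf_eq]
    tauto
  rw [h]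
  exact (onestep κ P hP hE).2 μ hμ A₀ hA₀

private lemma osf (κ : Kernel S S) [IsMarkovKernel κ] (P : Measure S → Measure (ℕ → S))
    (hP : IsPathMeasure κ P) (μ : Measure S) (hμ : IsProbabilityMeasure μ)
    (A₀ : Set S) (hA₀ : MeasurableSet A₀) (g : (ℕ → S) → ℝ≥0∞) (hg : Measurable g) :
    (∫⁻ ρ in {ρ : ℕ → S | ρ 0 ∈ A₀}, g (sh ρ) ∂(P μ))
      = ∫⁻ s in A₀, (∫⁻ σ, g σ ∂(P (κ s))) ∂μ := by
  rw [← lintegral_map hg measurable_sh, map_sh κ P hP μ hμ A₀ hA₀,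
    Measure.lintegral_bind (measurable_Pkernel κ P hP).aemeasurable hg.aemeasurable]

private lemma markov (κ : Kernel S S) [IsMarkovKernel κ] (P : Measure S → Measure (ℕ → S))
    (hP : IsPathMeasure κ P) :
    ∀ (n : ℕ) (μ : Measure S), IsProbabilityMeasure μ →
      ∀ (A : ℕ → Set S), (∀ i, MeasurableSet (A i)) →
      ∀ (E : Set (ℕ → S)), MeasurableSet E →
      P μ {ρ | (∀ i < n, ρ i ∈ A i) ∧ sh^[n] ρ ∈ E}
        = ∫⁻ ρ in {ρ : ℕ → S | ∀ i < n, ρ i ∈ A i}, P (Measure.dirac (ρ n)) E ∂(P μ) := by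
  intro n
  induction n with
  | zero =>
    intro μ hμ A hA E hE
    have h1 : {ρ : ℕ → S | (∀ i < 0, ρ i ∈ A i) ∧ sh^[0] ρ ∈ E} = E := by
      ext ρ; simp
    have h2 : {ρ : ℕ → S | ∀ i < 0, ρ i ∈ A i} = Set.univ := by
      ext ρ; simp
    rw [h1, h2, Measure.restrict_univ]
    have hmap : Measure.map (fun ρ : ℕ → S => ρ 0) (P μ) = μ := by
      ext A' hA'
      rw [Measure.map_apply (measurable_pi_apply 0) hA']
      have hs : (fun ρ : ℕ → S => ρ 0) ⁻¹' A' = {ρ : ℕ → S | ρ 0 ∈ A'} := rfl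
      rw [hs, P_eval_zero κ P hP μ hμ A' hA']
    calc P μ E = ∫⁻ s, P (Measure.dirac s) E ∂μ := (aff κ P hP hE).2 μ hμ
      _ = ∫⁻ s, P (Measure.dirac s) E ∂(Measure.map (fun ρ : ℕ → S => ρ 0) (P μ)) := by
          rw [hmap]
      _ = ∫⁻ ρ, P (Measure.dirac (ρ 0)) E ∂(P μ) :=
          lintegral_map (aff κ P hP hE).1 (measurable_pi_apply 0)
  | succ n ih =>
    intro μ hμ A hA E hE
    classical
    set A' : ℕ → Set S := fun i => A (i + 1) with hA'def
    have hA' : ∀ i, MeasurableSet (A' i) := fun i => hA (i + 1)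
    set W' : Set (ℕ → S) := {σ : ℕ → S | ∀ i < n, σ i ∈ A' i} with hW'def
    have hW'm : MeasurableSet W' := measurableSet_ltPrefix hA'
    set f' : (ℕ → S) → ℝ≥0∞ := fun σ => P (Measure.dirac (σ n)) E with hf'def
    have hf'm : Measurable f' := (aff κ P hP hE).1.comp (measurable_pi_apply n)
    have hWm : MeasurableSet {ρ : ℕ → S | ∀ i < n + 1, ρ i ∈ A i} := measurableSet_ltPrefix hA
    have hsplit : ∀ ρ : ℕ → S, (∀ i < n + 1, ρ i ∈ A i) ↔ (ρ 0 ∈ A 0 ∧ sh ρ ∈ W') := by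
      intro ρ
      constructor
      · intro h
        refine ⟨h 0 (by omega), fun i hi => h (i + 1) (by omega)⟩
      · rintro ⟨h0, hrest⟩ i hi
        cases i with
        | zero => exact h0
        | succ j => exact hrest j (by omega)
    set E'' : Set (ℕ → S) := {σ : ℕ → S | (∀ i < n, σ i ∈ A' i) ∧ sh^[n] σ ∈ E} with hE''def
    have hE''m : MeasurableSet E'' := hW'm.inter ((measurable_sh.iterate n) hE)
    have hstep_a : (∫⁻ ρ in {ρ : ℕ → S | ∀ i < n + 1, ρ i ∈ A i},
          P (Measure.dirac (ρ (n + 1))) E ∂(P μ))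
        = ∫⁻ ρ in {ρ : ℕ → S | ρ 0 ∈ A 0}, (W'.indicator f') (sh ρ) ∂(P μ) := by
      rw [← lintegral_indicator hWm, ← lintegral_indicator (show MeasurableSet {ρ : ℕ → S | ρ 0 ∈ A 0} from (measurable_pi_apply 0) (hA 0))]
      refine lintegral_congr fun ρ => ?_
      by_cases h0 : ρ 0 ∈ A 0
      · by_cases hr : sh ρ ∈ W'
        · have hmem : ρ ∈ {ρ : ℕ → S | ∀ i < n + 1, ρ i ∈ A i} := (hsplit ρ).2 ⟨h0, hr⟩
          rw [Set.indicator_of_mem hmem, Set.indicator_of_mem (show ρ ∈ {ρ : ℕ → S | ρ 0 ∈ A 0} from h0), Set.indicator_of_mem hr]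
          rfl
        · have hmem : ρ ∉ {ρ : ℕ → S | ∀ i < n + 1, ρ i ∈ A i} := by
            intro hc; exact hr ((hsplit ρ).1 hc).2
          rw [Set.indicator_of_notMem hmem, Set.indicator_of_mem (show ρ ∈ {ρ : ℕ → S | ρ 0 ∈ A 0} from h0),
            Set.indicator_of_notMem hr]
      · have hmem : ρ ∉ {ρ : ℕ → S | ∀ i < n + 1, ρ i ∈ A i} := by
          intro hc; exact h0 ((hsplit ρ).1 hc).1
        rw [Set.indicator_of_notMem hmem, Set.indicator_of_notMem (show ρ ∉ {ρ : ℕ → S | ρ 0 ∈ A 0} from h0)]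
    have hstep_c : ∀ s : S, (∫⁻ σ, (W'.indicator f') σ ∂(P (κ s))) = P (κ s) E'' := by
      intro s
      rw [lintegral_indicator hW'm]
      exact (ih (κ s) inferInstance A' hA' E hE).symm
    have hstep_e : {ρ : ℕ → S | ρ 0 ∈ A 0 ∧ sh ρ ∈ E''}
        = {ρ : ℕ → S | (∀ i < n + 1, ρ i ∈ A i) ∧ sh^[n + 1] ρ ∈ E} := by
      ext ρ
      simp only [Set.mem_setOf_eq, hE''def, hW'def]
      rw [Function.iterate_succ_apply]
      constructor
      · rintro ⟨h0, hrest, hsh⟩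
        exact ⟨(hsplit ρ).2 ⟨h0, hrest⟩, hsh⟩
      · rintro ⟨hpre, hsh⟩
        exact ⟨((hsplit ρ).1 hpre).1, ((hsplit ρ).1 hpre).2, hsh⟩
    calc P μ {ρ | (∀ i < n + 1, ρ i ∈ A i) ∧ sh^[n + 1] ρ ∈ E}
        = P μ {ρ : ℕ → S | ρ 0 ∈ A 0 ∧ sh ρ ∈ E''} := by rw [hstep_e]
      _ = ∫⁻ s in A 0, P (κ s) E'' ∂μ := (onestep κ P hP hE''m).2 μ hμ (A 0) (hA 0)
      _ = ∫⁻ s in A 0, (∫⁻ σ, (W'.indicator f') σ ∂(P (κ s))) ∂μ :=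
          (lintegral_congr fun s => (hstep_c s).symm)
      _ = ∫⁻ ρ in {ρ : ℕ → S | ρ 0 ∈ A 0}, (W'.indicator f') (sh ρ) ∂(P μ) :=
          (osf κ P hP μ hμ (A 0) (hA 0) _ (hf'm.indicator hW'm)).symm
      _ = ∫⁻ ρ in {ρ : ℕ → S | ∀ i < n + 1, ρ i ∈ A i},
            P (Measure.dirac (ρ (n + 1))) E ∂(P μ) := hstep_a.symm


private lemma measurableSet_evF' {B : Set S} (hB : MeasurableSet B) :
    MeasurableSet {ρ : ℕ → S | ∃ k, ρ k ∈ B} := by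
  have h : {ρ : ℕ → S | ∃ k, ρ k ∈ B} = ⋃ k, (fun ρ : ℕ → S => ρ k) ⁻¹' B := by
    ext ρ; simp
  rw [h]
  exact MeasurableSet.iUnion fun k => (measurable_pi_apply k) hB

private lemma measurableSet_evFle' {n : ℕ} {B : Set S} (hB : MeasurableSet B) :
    MeasurableSet {ρ : ℕ → S | ∃ k ≤ n, ρ k ∈ B} := by
  have h : {ρ : ℕ → S | ∃ k ≤ n, ρ k ∈ B} = ⋃ k ∈ {k : ℕ | k ≤ n}, (fun ρ : ℕ → S => ρ k) ⁻¹' B := by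
    ext ρ; simp
  rw [h]
  exact MeasurableSet.biUnion (Set.to_countable _) fun k _ => (measurable_pi_apply k) hB

/-- a DMC abstraction with a finite attractor whose preimage is an attractor,
together with uniform lower bounds on reachability from the attractor elements, yields
decisiveness of `T₁` w.r.t. every `α`-closed set, from every initial probability measure. -/
theorem statement_11 {S₁ S₂ : Type*} [MeasurableSpace S₁] [MeasurableSpace S₂]
    [Countable S₂] [MeasurableSingletonClass S₂]
    (κ₁ : Kernel S₁ S₁) [IsMarkovKernel κ₁] (κ₂ : Kernel S₂ S₂) [IsMarkovKernel κ₂]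
    (P₁ : Measure S₁ → Measure (ℕ → S₁)) (hP₁ : IsPathMeasure κ₁ P₁)
    (P₂ : Measure S₂ → Measure (ℕ → S₂)) (hP₂ : IsPathMeasure κ₂ P₂)
    (α : S₁ → S₂) (hα : Measurable α) (habs : IsAbstraction κ₁ κ₂ α)
    (A₂ : Set S₂) (hA₂fin : A₂.Finite)
    (hA₂attr : ∀ ν : Measure S₂, IsProbabilityMeasure ν → P₂ ν (evF A₂) = 1)
    (hA₁attr : ∀ μ : Measure S₁, IsProbabilityMeasure μ → P₁ μ (evF (α ⁻¹' A₂)) = 1)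
    (hbound : ∀ s ∈ A₂, ∀ B : Set S₂, ∃ p : ℝ≥0∞, 0 < p ∧ ∃ k : ℕ,
      (∀ μ : Measure S₁, IsProbabilityMeasure μ → μ (α ⁻¹' {s}) = 1 →
        p ≤ P₁ μ (evFle k (α ⁻¹' B))) ∨
      (∀ μ : Measure S₁, IsProbabilityMeasure μ → μ (α ⁻¹' {s}) = 1 →
        P₁ μ (evF (α ⁻¹' B)) = 0)) :
    ∀ B : Set S₂, ∀ μ : Measure S₁, IsProbabilityMeasure μ →
      Decisive P₁ μ (α ⁻¹' B) := by
  classical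
  intro B μ hμ
  haveI := hμ
  have meas₂ : ∀ C : Set S₂, MeasurableSet C := fun C => (Set.to_countable C).measurableSet
  have hprob : ∀ ν : Measure S₁, IsProbabilityMeasure ν → IsProbabilityMeasure (P₁ ν) :=
    fun ν hν => (hP₁ ν hν).1
  -- choose constants for this B
  have hbB : ∀ s, s ∈ A₂ → ∃ p : ℝ≥0∞, 0 < p ∧ ∃ k : ℕ,
      (∀ ν : Measure S₁, IsProbabilityMeasure ν → ν (α ⁻¹' {s}) = 1 →
        p ≤ P₁ ν (evFle k (α ⁻¹' B))) ∨
      (∀ ν : Measure S₁, IsProbabilityMeasure ν → ν (α ⁻¹' {s}) = 1 →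
        P₁ ν (evF (α ⁻¹' B)) = 0) := fun s hs => hbound s hs B
  choose! p hp using hbB
  have hp0 : ∀ s ∈ A₂, 0 < p s := fun s hs => (hp s hs).1
  choose! k hk using fun s hs => (hp s hs).2
  set Neg : Set S₂ := {s | s ∈ A₂ ∧ ∀ ν : Measure S₁, IsProbabilityMeasure ν →
      ν (α ⁻¹' {s}) = 1 → P₁ ν (evF (α ⁻¹' B)) = 0} with hNegdef
  set G : Set S₁ := α ⁻¹' (B ∪ Neg) with hGdef
  have mG : MeasurableSet G := hα (meas₂ _)
  have hposbound : ∀ s ∈ A₂, s ∉ Neg → ∀ ν : Measure S₁, IsProbabilityMeasure ν →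
      ν (α ⁻¹' {s}) = 1 → p s ≤ P₁ ν (evFle (k s) (α ⁻¹' B)) := by
    intro s hs hsn
    rcases hk s hs with h | h
    · exact h
    · exact absurd ⟨hs, h⟩ hsn
  set F : Finset S₂ := hA₂fin.toFinset with hFdef
  set K : ℕ := F.sup k with hKdef
  set pm : ℝ≥0∞ := F.inf (fun s => if s ∈ Neg then 1 else p s) with hpmdef
  have hpm0 : 0 < pm := by
    rw [hpmdef]
    refine (Finset.lt_inf_iff ENNReal.zero_lt_top).2 fun s hs => ?_
    split_ifs with h
    · norm_num
    · exact hp0 s (hA₂fin.mem_toFinset.1 hs)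
  set NG : Set (ℕ → S₁) := {ρ : ℕ → S₁ | ∀ j, ρ j ∉ G} with hNGdef
  have mNG : MeasurableSet NG := by
    have h : NG = ⋂ j, (fun ρ : ℕ → S₁ => ρ j) ⁻¹' Gᶜ := by
      ext ρ; simp [hNGdef]
    rw [h]
    exact MeasurableSet.iInter fun j => (measurable_pi_apply j) mG.compl
  set c : ℝ≥0∞ := ⨆ (ν : Measure S₁) (_ : IsProbabilityMeasure ν), P₁ ν NG with hcdef
  have hUlec : ∀ ν : Measure S₁, IsProbabilityMeasure ν → P₁ ν NG ≤ c := by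
    intro ν hν
    rw [hcdef]
    exact le_iSup₂ (f := fun (ν : Measure S₁) (_ : IsProbabilityMeasure ν) => P₁ ν NG) ν hν
  have hc1 : c ≤ 1 := by
    rw [hcdef]
    refine iSup_le fun ν => iSup_le fun hν => ?_
    haveI := hprob ν hν
    exact prob_le_one
  have hdirac1 : ∀ t : S₁, (Measure.dirac t) (α ⁻¹' {α t}) = 1 := by
    intro t
    rw [Measure.dirac_apply' t (hα (meas₂ _)),
      Set.indicator_of_mem (show t ∈ α ⁻¹' {α t} from rfl)]
    rfl
  have hunif : ∀ t : S₁, α t ∈ A₂ → α t ∉ Neg →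
      pm ≤ P₁ (Measure.dirac t) (evFle K G) := by
    intro t h1 h2
    have hb := hposbound (α t) h1 h2 (Measure.dirac t) inferInstance (hdirac1 t)
    have hsub : evFle (k (α t)) (α ⁻¹' B) ⊆ evFle K G := by
      rintro ρ ⟨j, hj, hmem⟩
      exact ⟨j, le_trans hj (Finset.le_sup (hA₂fin.mem_toFinset.2 h1)), Or.inl hmem⟩
    have hpm_le : pm ≤ p (α t) := by
      rw [hpmdef]
      have h3 := Finset.inf_le (f := fun s => if s ∈ Neg then 1 else p s)
        (hA₂fin.mem_toFinset.2 h1)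
      simpa [if_neg h2] using h3
    exact le_trans hpm_le (le_trans hb (measure_mono hsub))
  have step2 : ∀ t : S₁, α t ∈ A₂ → α t ∉ Neg →
      P₁ (Measure.dirac t) NG ≤ (1 - pm) * c := by
    intro t h1 h2
    haveI := hprob (Measure.dirac t) inferInstance
    have hsetNG : NG = {ρ : ℕ → S₁ | (∀ i < K + 1, ρ i ∈ Gᶜ) ∧ sh^[K + 1] ρ ∈ NG} := by
      ext ρ
      simp only [hNGdef, Set.mem_setOf_eq, Set.mem_compl_iff]
      constructor
      · intro h
        refine ⟨fun i _ => h i, fun j => ?_⟩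
        rw [sh_iterate]
        exact h _
      · rintro ⟨h1', h2'⟩ j
        by_cases hj : j < K + 1
        · exact h1' j hj
        · have h4 := h2' (j - (K + 1))
          rw [sh_iterate] at h4
          have hje : j - (K + 1) + (K + 1) = j := by omega
          rwa [hje] at h4
    have hmarkov := markov κ₁ P₁ hP₁ (K + 1) (Measure.dirac t) inferInstance
      (fun _ => Gᶜ) (fun _ => mG.compl) NG mNG
    rw [← hsetNG] at hmarkov
    have hW : P₁ (Measure.dirac t) {ρ : ℕ → S₁ | ∀ i < K + 1, ρ i ∈ Gᶜ} ≤ 1 - pm := by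
      have hWc : {ρ : ℕ → S₁ | ∀ i < K + 1, ρ i ∈ Gᶜ} = (evFle K G)ᶜ := by
        ext ρ
        simp only [Set.mem_setOf_eq, Set.mem_compl_iff, evFle]
        constructor
        · rintro h ⟨j, hj, hmem⟩
          exact h j (by omega) hmem
        · intro h i hi hmem
          exact h ⟨i, by omega, hmem⟩
      rw [hWc, prob_compl_eq_one_sub (show MeasurableSet (evFle K G) from measurableSet_evFle' mG)]
      exact tsub_le_tsub_left (hunif t h1 h2) 1
    calc P₁ (Measure.dirac t) NG
        = ∫⁻ ρ in {ρ : ℕ → S₁ | ∀ i < K + 1, ρ i ∈ Gᶜ},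
            P₁ (Measure.dirac (ρ (K + 1))) NG ∂(P₁ (Measure.dirac t)) := hmarkov
      _ ≤ ∫⁻ _ in {ρ : ℕ → S₁ | ∀ i < K + 1, ρ i ∈ Gᶜ}, c ∂(P₁ (Measure.dirac t)) :=
          lintegral_mono fun ρ => hUlec _ inferInstance
      _ = c * P₁ (Measure.dirac t) {ρ : ℕ → S₁ | ∀ i < K + 1, ρ i ∈ Gᶜ} :=
          setLIntegral_const _ _
      _ ≤ c * (1 - pm) := mul_le_mul_right hW c
      _ = (1 - pm) * c := mul_comm _ _
  have step3 : ∀ ν : Measure S₁, IsProbabilityMeasure ν → P₁ ν NG ≤ (1 - pm) * c := by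
    intro ν hν
    haveI := hν
    haveI := hprob ν hν
    set R : Set S₁ := α ⁻¹' A₂ with hRdef
    have mR : MeasurableSet R := hα (meas₂ _)
    set E2 : Set (ℕ → S₁) := {σ : ℕ → S₁ | σ 0 ∈ R} ∩ NG with hE2def
    have mE2 : MeasurableSet E2 := ((measurable_pi_apply 0) mR).inter mNG
    have hbE2 : ∀ t : S₁, P₁ (Measure.dirac t) E2
        ≤ (R \ G).indicator (fun _ => (1 - pm) * c) t := by
      intro t
      haveI := hprob (Measure.dirac t) inferInstance
      by_cases ht : t ∈ R \ G
      · rw [Set.indicator_of_mem ht]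
        have h1 : α t ∈ A₂ := ht.1
        have h2 : α t ∉ Neg := fun hc => ht.2 (Or.inr hc)
        exact le_trans (measure_mono Set.inter_subset_right) (step2 t h1 h2)
      · rw [Set.indicator_of_notMem ht]
        have hsub : E2 ⊆ {σ : ℕ → S₁ | σ 0 ∈ R \ G} := by
          rintro σ ⟨h1, h2⟩
          exact ⟨h1, h2 0⟩
        have h5 : P₁ (Measure.dirac t) E2 ≤ (Measure.dirac t) (R \ G) := by
          calc P₁ (Measure.dirac t) E2
              ≤ P₁ (Measure.dirac t) {σ : ℕ → S₁ | σ 0 ∈ R \ G} := measure_mono hsub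
            _ = (Measure.dirac t) (R \ G) :=
                P_eval_zero κ₁ P₁ hP₁ _ inferInstance _ (mR.diff mG)
        rw [Measure.dirac_apply' t (mR.diff mG), Set.indicator_of_notMem ht] at h5
        simpa using h5
    have hcover : NG ⊆ (evF R)ᶜ ∪
        ⋃ n, {ρ : ℕ → S₁ | (∀ i < n, ρ i ∈ Gᶜ ∩ Rᶜ) ∧ sh^[n] ρ ∈ E2} := by
      intro ρ hρ
      have hρ' : ∀ j, ρ j ∉ G := hρ
      by_cases hR' : ∃ j, ρ j ∈ R
      · right
        refine Set.mem_iUnion.2 ⟨Nat.find hR', ?_, ?_, ?_⟩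
        · intro i hi
          exact ⟨hρ' i, fun hc => Nat.find_min hR' hi hc⟩
        · show sh^[Nat.find hR'] ρ 0 ∈ R
          rw [sh_iterate]
          have := Nat.find_spec hR'
          simpa using this
        · intro j
          rw [sh_iterate]
          exact hρ' _
      · left
        rintro ⟨j, hj⟩
        exact hR' ⟨j, hj⟩
    have hevFR : P₁ ν ((evF R)ᶜ) = 0 := by
      rw [prob_compl_eq_one_sub (show MeasurableSet (evF R) from measurableSet_evF' mR), hA₁attr ν hν]
      simp
    have mWn : ∀ n : ℕ, MeasurableSet {ρ : ℕ → S₁ | ∀ i < n, ρ i ∈ Gᶜ ∩ Rᶜ} := fun n =>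
      measurableSet_ltPrefix fun _ => mG.compl.inter mR.compl
    have hDbound : ∀ n : ℕ, P₁ ν {ρ : ℕ → S₁ | (∀ i < n, ρ i ∈ Gᶜ ∩ Rᶜ) ∧ sh^[n] ρ ∈ E2}
        ≤ (1 - pm) * c * P₁ ν ((fun ρ : ℕ → S₁ => ρ n) ⁻¹' (R \ G)
            ∩ {ρ : ℕ → S₁ | ∀ i < n, ρ i ∈ Gᶜ ∩ Rᶜ}) := by
      intro n
      have hm := markov κ₁ P₁ hP₁ n ν hν (fun _ => Gᶜ ∩ Rᶜ)
        (fun _ => mG.compl.inter mR.compl) E2 mE2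
      rw [hm]
      have hind : ∀ ρ : ℕ → S₁, P₁ (Measure.dirac (ρ n)) E2
          ≤ ((fun ρ : ℕ → S₁ => ρ n) ⁻¹' (R \ G)).indicator (fun _ => (1 - pm) * c) ρ := by
        intro ρ
        have h6 := hbE2 (ρ n)
        by_cases h : ρ n ∈ R \ G
        · rw [Set.indicator_of_mem h] at h6
          rwa [Set.indicator_of_mem (show ρ ∈ (fun ρ : ℕ → S₁ => ρ n) ⁻¹' (R \ G) from h)]
        · rw [Set.indicator_of_notMem h] at h6
          rw [Set.indicator_of_notMem (show ρ ∉ (fun ρ : ℕ → S₁ => ρ n) ⁻¹' (R \ G) from h)]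
          exact h6
      calc (∫⁻ ρ in {ρ : ℕ → S₁ | ∀ i < n, ρ i ∈ Gᶜ ∩ Rᶜ},
              P₁ (Measure.dirac (ρ n)) E2 ∂(P₁ ν))
          ≤ ∫⁻ ρ in {ρ : ℕ → S₁ | ∀ i < n, ρ i ∈ Gᶜ ∩ Rᶜ},
              ((fun ρ : ℕ → S₁ => ρ n) ⁻¹' (R \ G)).indicator (fun _ => (1 - pm) * c) ρ
                ∂(P₁ ν) := lintegral_mono hind
        _ = (1 - pm) * c * P₁ ν ((fun ρ : ℕ → S₁ => ρ n) ⁻¹' (R \ G)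
              ∩ {ρ : ℕ → S₁ | ∀ i < n, ρ i ∈ Gᶜ ∩ Rᶜ}) := by
            rw [lintegral_indicator ((measurable_pi_apply n) (mR.diff mG)),
              setLIntegral_const, Measure.restrict_apply ((measurable_pi_apply n) (mR.diff mG))]
    have hdisjD' : Pairwise (Function.onFun Disjoint fun n : ℕ =>
        (fun ρ : ℕ → S₁ => ρ n) ⁻¹' (R \ G) ∩ {ρ : ℕ → S₁ | ∀ i < n, ρ i ∈ Gᶜ ∩ Rᶜ}) := by
      intro m n hmn
      rcases lt_or_gt_of_ne hmn with h | h
      · refine Set.disjoint_left.2 fun ρ h1 h2 => ?_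
        exact (h2.2 m h).2 h1.1.1
      · refine Set.disjoint_left.2 fun ρ h1 h2 => ?_
        exact (h1.2 n h).2 h2.1.1
    have hsumD' : (∑' n : ℕ, P₁ ν ((fun ρ : ℕ → S₁ => ρ n) ⁻¹' (R \ G)
        ∩ {ρ : ℕ → S₁ | ∀ i < n, ρ i ∈ Gᶜ ∩ Rᶜ})) ≤ 1 := by
      rw [← measure_iUnion hdisjD'
        (fun n => ((measurable_pi_apply n) (mR.diff mG)).inter (mWn n))]
      exact prob_le_one
    have hcov2 : P₁ ν NG ≤ P₁ ν ((evF R)ᶜ)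
        + ∑' n : ℕ, P₁ ν {ρ : ℕ → S₁ | (∀ i < n, ρ i ∈ Gᶜ ∩ Rᶜ) ∧ sh^[n] ρ ∈ E2} := by
      refine le_trans (measure_mono hcover) (le_trans (measure_union_le _ _) ?_)
      exact add_le_add_right (measure_iUnion_le _) _
    calc P₁ ν NG ≤ P₁ ν ((evF R)ᶜ)
          + ∑' n : ℕ, P₁ ν {ρ : ℕ → S₁ | (∀ i < n, ρ i ∈ Gᶜ ∩ Rᶜ) ∧ sh^[n] ρ ∈ E2} := hcov2
      _ = ∑' n : ℕ, P₁ ν {ρ : ℕ → S₁ | (∀ i < n, ρ i ∈ Gᶜ ∩ Rᶜ) ∧ sh^[n] ρ ∈ E2} := by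
          rw [hevFR, zero_add]
      _ ≤ ∑' n : ℕ, (1 - pm) * c * P₁ ν ((fun ρ : ℕ → S₁ => ρ n) ⁻¹' (R \ G)
            ∩ {ρ : ℕ → S₁ | ∀ i < n, ρ i ∈ Gᶜ ∩ Rᶜ}) := ENNReal.tsum_le_tsum hDbound
      _ = (1 - pm) * c * ∑' n : ℕ, P₁ ν ((fun ρ : ℕ → S₁ => ρ n) ⁻¹' (R \ G)
            ∩ {ρ : ℕ → S₁ | ∀ i < n, ρ i ∈ Gᶜ ∩ Rᶜ}) := ENNReal.tsum_mul_left
      _ ≤ (1 - pm) * c * 1 := mul_le_mul_right hsumD' _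
      _ = (1 - pm) * c := mul_one _
  have hcle : c ≤ (1 - pm) * c := by
    conv_lhs => rw [hcdef]
    exact iSup_le fun ν => iSup_le fun hν => step3 ν hν
  have hc0 : c = 0 := by
    by_contra h
    have hlt : (1 - pm) * c < 1 * c := by
      rw [mul_comm _ c, mul_comm 1 c]; refine ENNReal.mul_lt_mul_right h (ne_top_of_le_ne_top one_ne_top hc1) ?_
      exact ENNReal.sub_lt_self one_ne_top one_ne_zero hpm0.ne'
    rw [one_mul] at hlt
    exact absurd hcle (not_le.2 hlt)
  have hU0 : P₁ μ NG = 0 := le_antisymm (hc0 ▸ hUlec μ hμ) zero_le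
  haveI := hprob μ hμ
  have hFG : P₁ μ (evF G) = 1 := by
    have hcNG : (evF G)ᶜ = NG := by
      ext ρ
      simp [evF, hNGdef]
    have h2 := prob_compl_eq_one_sub (μ := P₁ μ) (show MeasurableSet (evF G) from measurableSet_evF' mG)
    rw [hcNG, hU0] at h2
    have h3 : (1 : ℝ≥0∞) ≤ P₁ μ (evF G) := tsub_eq_zero_iff_le.1 h2.symm
    exact le_antisymm prob_le_one h3
  have hincl : evF G ⊆ evF (α ⁻¹' B) ∪ evF (avoid P₁ (α ⁻¹' B)) := by
    rintro ρ ⟨j, hj⟩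
    rcases hj with hB' | hN
    · exact Or.inl ⟨j, hB'⟩
    · refine Or.inr ⟨j, ?_⟩
      show P₁ (Measure.dirac (ρ j)) (evF (α ⁻¹' B)) = 0
      exact hN.2 (Measure.dirac (ρ j)) inferInstance (hdirac1 (ρ j))
  show P₁ μ (evF (α ⁻¹' B) ∪ evF (avoid P₁ (α ⁻¹' B))) = 1
  have hge := measure_mono (μ := P₁ μ) hincl
  rw [hFG] at hge
  exact le_antisymm prob_le_one hge


end STS
end

section
/- Let T₁ = (S₁,Σ₁,κ₁) be an STS, T₂ = (S₂,2^{S₂},κ₂) a finite Markov chain (S₂ finite), and α : S₁ → S₂ measurable, with T₂ an α-abstraction of T₁. Fix a probability measure μ on S₁ and assume T₁ is fair from μ w.r.t. every α-closed set α⁻¹(B), B ⊆ S₂. Then T₁ is decisive from μ w.r.t. every α-closed set: for every B ⊆ S₂, Prob^{T₁}_μ(F α⁻¹(B) ∪ F C̃) = 1, where C̃ is the avoid-set of α⁻¹(B) in T₁. -/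
open MeasureTheory ProbabilityTheory ENNReal Filter Topology

namespace STS

variable {S : Type*} [MeasurableSpace S]

/-- if `T₂` is a finite Markov chain which is an `α`-abstraction of `T₁`, and
`T₁` is fair from `μ` w.r.t. every `α`-closed set, then `T₁` is decisive from `μ` w.r.t.
every `α`-closed set. -/
theorem statement_12 {S₁ S₂ : Type*} [MeasurableSpace S₁] [MeasurableSpace S₂]
    [Finite S₂] [MeasurableSingletonClass S₂]
    (κ₁ : Kernel S₁ S₁) [IsMarkovKernel κ₁] (κ₂ : Kernel S₂ S₂) [IsMarkovKernel κ₂]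
    (P₁ : Measure S₁ → Measure (ℕ → S₁)) (hP₁ : IsPathMeasure κ₁ P₁)
    (P₂ : Measure S₂ → Measure (ℕ → S₂)) (hP₂ : IsPathMeasure κ₂ P₂)
    (α : S₁ → S₂) (hα : Measurable α) (habs : IsAbstraction κ₁ κ₂ α)
    (μ : Measure S₁) (hμ : IsProbabilityMeasure μ)
    (hfair : ∀ B : Set S₂, Fair P₁ μ (α ⁻¹' B)) :
    ∀ B : Set S₂, Decisive P₁ μ (α ⁻¹' B) := by
  -- every subset of S₂ is measurable
  have mS2 : ∀ A : Set S₂, MeasurableSet A := fun A => A.toFinite.measurableSet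
  haveI : IsProbabilityMeasure (P₁ μ) := (hP₁ μ hμ).1
  -- measurability of cylinders and GF events
  have mCyl : ∀ (n : ℕ) (A : ℕ → Set S₁), (∀ i, MeasurableSet (A i)) →
      MeasurableSet {ρ : ℕ → S₁ | ∀ i ≤ n, ρ i ∈ A i} := by
    intro n A hA
    have : {ρ : ℕ → S₁ | ∀ i ≤ n, ρ i ∈ A i}
        = ⋂ i, ⋂ (_ : i ≤ n), (fun ρ : ℕ → S₁ => ρ i) ⁻¹' A i := by
      ext ρ; simp [Set.mem_iInter]
    rw [this]
    exact MeasurableSet.iInter fun i => MeasurableSet.iInter fun _ =>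
      (measurable_pi_apply i) (hA i)
  have mGF : ∀ (A : Set S₁), MeasurableSet A → MeasurableSet (evGF A) := by
    intro A hA
    have : evGF A = ⋂ n, ⋃ k, ⋃ (_ : n ≤ k), (fun ρ : ℕ → S₁ => ρ k) ⁻¹' A := by
      ext ρ; simp [evGF]
    rw [this]
    exact MeasurableSet.iInter fun n => MeasurableSet.iUnion fun k =>
      MeasurableSet.iUnion fun _ => (measurable_pi_apply k) hA
  -- Omega applied to a measurable set
  have hOmega : ∀ (μ' : Measure S₁) (A : Set S₁), MeasurableSet A →
      Omega κ₁ μ' A = ∫⁻ s, κ₁ s A ∂μ' :=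
    fun μ' A h => Measure.bind_apply h (κ₁.measurable.aemeasurable)
  have hOmega₂ : ∀ (ν : Measure S₂) (A : Set S₂),
      Omega κ₂ ν A = ∫⁻ t, κ₂ t A ∂ν :=
    fun ν A => Measure.bind_apply (mS2 A) (κ₂.measurable.aemeasurable)
  -- a probability measure giving mass one to a singleton is dirac
  have hdirac : ∀ (ν : Measure S₂), IsProbabilityMeasure ν → ∀ t : S₂, ν {t} = 1 →
      ν = Measure.dirac t := by
    intro ν hν t ht
    ext A hA
    rw [Measure.dirac_apply' _ hA]
    by_cases h : t ∈ A
    · have h1 : ν A ≤ 1 := prob_le_one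
      have h2 : (1 : ℝ≥0∞) ≤ ν A := ht ▸ measure_mono (Set.singleton_subset_iff.2 h)
      simp [Set.indicator_of_mem h, le_antisymm h1 h2]
    · have hsub : A ⊆ {t}ᶜ := Set.subset_compl_singleton_iff.2 h
      have : ν {t}ᶜ = 0 := by
        rw [measure_compl (measurableSet_singleton t) (measure_ne_top ν _), ht,
          measure_univ, tsub_self]
      simp [Set.indicator_of_notMem h, measure_mono_null hsub this]
  intro B
  set C : Set S₁ := α ⁻¹' B with hC
  have mC : MeasurableSet C := hα (mS2 B)
  -- the reachability relation in T₂
  set step : S₂ → S₂ → Prop := fun t t' => 0 < κ₂ t {t'} with hstep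
  set R : Set S₂ := {t | ∃ b ∈ B, Relation.ReflTransGen step t b} with hR
  have hBR : B ⊆ R := fun b hb => ⟨b, hb, Relation.ReflTransGen.refl⟩
  have hRclosed : ∀ u, u ∉ R → κ₂ u R = 0 := by
    intro u hu
    have : R = ⋃ t' ∈ R, ({t'} : Set S₂) := by simp
    rw [this, measure_biUnion_null_iff R.to_countable]
    intro t' ht'
    by_contra h
    exact hu (by
      obtain ⟨b, hb, htr⟩ := ht'
      exact ⟨b, hb, htr.head (pos_iff_ne_zero.2 h)⟩)
  -- one step of the abstraction, for α-closed sets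
  have honestep : ∀ (μ' : Measure S₁), IsProbabilityMeasure μ' → ∀ A₂ : Set S₂,
      (Omega κ₁ μ' (α ⁻¹' A₂) = 0 ↔ Omega κ₂ (Measure.map α μ') A₂ = 0) := by
    intro μ' hμ' A₂
    have := habs μ' hμ' A₂ (mS2 A₂)
    rwa [Measure.map_apply hα (mS2 A₂)] at this
  -- `α⁻¹{t} ∈ PreProb (α⁻¹{t'})` whenever `κ₂ t {t'} > 0`
  have hPre : ∀ t t' : S₂, 0 < κ₂ t {t'} →
      (α ⁻¹' {t}) ∈ PreProb P₁ (α ⁻¹' {t'}) := by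
    intro t t' htt'
    refine ⟨hα (mS2 _), fun μ' hμ' hμ't => ?_⟩
    set A : ℕ → Set S₁ := fun i => if i = 0 then α ⁻¹' {t} else α ⁻¹' {t'} with hA
    have hmA : ∀ i, MeasurableSet (A i) := by
      intro i; by_cases h : i = 0 <;> simp [hA, h, hα (mS2 _)]
    have hset : {ρ : ℕ → S₁ | ρ 0 ∈ α ⁻¹' {t} ∧ ρ 1 ∈ α ⁻¹' {t'}}
        = {ρ | ∀ i ≤ 1, ρ i ∈ A i} := by
      ext ρ
      constructor
      · rintro ⟨h0, h1⟩ i hi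
        interval_cases i <;> simpa [hA]
      · intro h
        exact ⟨by simpa [hA] using h 0 (by norm_num), by simpa [hA] using h 1 le_rfl⟩
    rw [hset, (hP₁ μ' hμ').2 1 A hmA]
    have hcyl : cylProb κ₁ 1 μ' A = ∫⁻ s in α ⁻¹' {t}, κ₁ s (α ⁻¹' {t'}) ∂μ' := by
      simp [cylProb, hA]
    rw [hcyl]
    by_contra h
    rw [not_lt, nonpos_iff_eq_zero] at h
    -- then the one-step measure of α⁻¹{t'} is zero
    have hcompl : μ' (α ⁻¹' {t})ᶜ = 0 := by
      rw [measure_compl (hα (mS2 _)) (measure_ne_top μ' _), hμ't, measure_univ, tsub_self]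
    have hfull : Omega κ₁ μ' (α ⁻¹' {t'}) = 0 := by
      rw [hOmega μ' _ (hα (mS2 _)),
        ← lintegral_add_compl (fun s => κ₁ s (α ⁻¹' {t'})) (hα (mS2 ({t} : Set S₂))), h,
        setLIntegral_measure_zero _ _ hcompl, add_zero]
    have hmap : Measure.map α μ' = Measure.dirac t := by
      refine hdirac _ (Measure.isProbabilityMeasure_map hα.aemeasurable) t ?_
      rw [Measure.map_apply hα (mS2 _)]; exact hμ't
    have := (honestep μ' hμ' {t'}).1 hfull
    rw [hmap, hOmega₂, lintegral_dirac' t (κ₂.measurable_coe (mS2 _))] at this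
    exact absurd this (pos_iff_ne_zero.1 htt')
  -- staying in Cᶜ forever when starting concentrated on α⁻¹(Rᶜ)
  have hstay : ∀ n : ℕ, ∀ μ' : Measure S₁, IsProbabilityMeasure μ' →
      μ' (α ⁻¹' Rᶜ) = 1 → cylProb κ₁ n μ' (fun _ => Cᶜ) = 1 := by
    intro n
    induction n with
    | zero =>
      intro μ' hμ' hμ'R
      have hsub : α ⁻¹' Rᶜ ⊆ Cᶜ := fun s hs hsC => hs (hBR hsC)
      exact le_antisymm prob_le_one (hμ'R ▸ measure_mono hsub)
    | succ n ih =>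
      intro μ' hμ' hμ'R
      -- μ'(α⁻¹ R) = 0
      have hpre0 : μ' (α ⁻¹' R) = 0 := by
        have : μ' (α ⁻¹' Rᶜ)ᶜ = 0 := by
          rw [measure_compl (hα (mS2 _)) (measure_ne_top μ' _), hμ'R, measure_univ, tsub_self]
        simpa [← Set.preimage_compl] using this
      -- Omega κ₂ (map α μ') R = 0
      have hν : Omega κ₂ (Measure.map α μ') R = 0 := by
        rw [hOmega₂]
        rw [lintegral_eq_zero_iff (κ₂.measurable_coe (mS2 R))]
        have hνR : (Measure.map α μ') R = 0 := by
          rw [Measure.map_apply hα (mS2 R)]; exact hpre0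
        refine measure_mono_null ?_ hνR
        intro u hu
        by_contra huR
        exact hu (hRclosed u huR)
      -- so Omega κ₁ μ' (α⁻¹ R) = 0, hence a.e. s, κ₁ s (α⁻¹ R) = 0
      have h1 : Omega κ₁ μ' (α ⁻¹' R) = 0 := (honestep μ' hμ' R).2 hν
      rw [hOmega μ' _ (hα (mS2 R))] at h1
      have hae : ∀ᵐ s ∂μ', κ₁ s (α ⁻¹' R) = 0 := by
        have := (lintegral_eq_zero_iff (κ₁.measurable_coe (hα (mS2 R)))).1 h1
        filter_upwards [this] with s hs using hs
      have hae1 : ∀ᵐ s ∂μ', cylProb κ₁ n (κ₁ s) (fun _ => Cᶜ) = 1 := by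
        filter_upwards [hae] with s hs
        refine ih (κ₁ s) (by infer_instance) ?_
        have : κ₁ s (α ⁻¹' Rᶜ) = 1 := by
          have hc : (α ⁻¹' Rᶜ) = (α ⁻¹' R)ᶜ := by rw [Set.preimage_compl]
          rw [hc, measure_compl (hα (mS2 R)) (measure_ne_top _ _), hs, measure_univ, tsub_zero]
        exact this
      have : cylProb κ₁ (n + 1) μ' (fun _ => Cᶜ)
          = ∫⁻ s in Cᶜ, cylProb κ₁ n (κ₁ s) (fun _ => Cᶜ) ∂μ' := by
        simp [cylProb]
      rw [this, lintegral_congr_ae (ae_restrict_of_ae hae1), setLIntegral_one]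
      have hsub : α ⁻¹' Rᶜ ⊆ Cᶜ := fun s hs hsC => hs (hBR hsC)
      exact le_antisymm prob_le_one (hμ'R ▸ measure_mono hsub)
  -- α⁻¹(Rᶜ) is contained in the avoid set of C
  have havoid : α ⁻¹' Rᶜ ⊆ avoid P₁ C := by
    intro s hs
    haveI : IsProbabilityMeasure (P₁ (Measure.dirac s)) := (hP₁ _ (by infer_instance)).1
    have hds : (Measure.dirac s) (α ⁻¹' Rᶜ) = 1 := by
      rw [Measure.dirac_apply' _ (hα (mS2 _)), Set.indicator_of_mem hs]
      rfl
    have hK : ∀ n : ℕ, P₁ (Measure.dirac s) (evFle n C) = 0 := by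
      intro n
      have hKcyl : P₁ (Measure.dirac s) {ρ | ∀ i ≤ n, ρ i ∈ (fun _ : ℕ => Cᶜ) i} = 1 := by
        rw [(hP₁ _ (by infer_instance)).2 n (fun _ => Cᶜ) (fun _ => mC.compl)]
        exact hstay n _ (by infer_instance) hds
      have hKc : P₁ (Measure.dirac s) {ρ : ℕ → S₁ | ∀ i ≤ n, ρ i ∈ Cᶜ}ᶜ = 0 := by
        rw [measure_compl (mCyl n (fun _ => Cᶜ) (fun _ => mC.compl)) (measure_ne_top _ _),
          hKcyl, measure_univ, tsub_self]
      refine measure_mono_null ?_ hKc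
      rintro ρ ⟨k, hk, hkC⟩ hall
      exact (hall k hk) hkC
    have hsub : evF C ⊆ ⋃ n, evFle n C := fun ρ ⟨k, hk⟩ => Set.mem_iUnion.2 ⟨k, k, le_rfl, hk⟩
    have : P₁ (Measure.dirac s) (evF C) ≤ ∑' n, P₁ (Measure.dirac s) (evFle n C) :=
      le_trans (measure_mono hsub) (measure_iUnion_le _)
    simp only [hK, tsum_zero] at this
    exact le_antisymm this zero_le
  -- fairness: along a.e. path, GF α⁻¹{t} and a κ₂-step t→t' imply GF α⁻¹{t'}
  have hFairNull : ∀ t t' : S₂, 0 < κ₂ t {t'} →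
      P₁ μ (evGF (α ⁻¹' {t}) \ evGF (α ⁻¹' {t'})) = 0 := by
    intro t t' htt'
    by_cases hpos : 0 < P₁ μ (evGF (α ⁻¹' {t}))
    · have heq := hfair {t'} (α ⁻¹' {t}) (hPre t t' htt') hpos
      have hsub : evGF (α ⁻¹' {t'}) ∩ evGF (α ⁻¹' {t}) ⊆ evGF (α ⁻¹' {t}) :=
        Set.inter_subset_right
      have hdiff : evGF (α ⁻¹' {t}) \ evGF (α ⁻¹' {t'})
          = evGF (α ⁻¹' {t}) \ (evGF (α ⁻¹' {t'}) ∩ evGF (α ⁻¹' {t})) := by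
        ext ρ; simp only [Set.mem_diff, Set.mem_inter_iff]; tauto
      rw [hdiff, measure_diff hsub ((mGF _ (hα (mS2 _))).inter (mGF _ (hα (mS2 _)))).nullMeasurableSet
        (measure_ne_top _ _), heq, tsub_self]
    · rw [not_lt, nonpos_iff_eq_zero] at hpos
      exact measure_mono_null Set.diff_subset hpos
  -- the null set of unfair behaviours
  set N : Set (ℕ → S₁) := ⋃ p : S₂ × S₂, ⋃ (_ : 0 < κ₂ p.1 {p.2}),
    (evGF (α ⁻¹' {p.1}) \ evGF (α ⁻¹' {p.2})) with hN
  have hNnull : P₁ μ N = 0 := by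
    refine measure_iUnion_null fun p => measure_iUnion_null fun hp => hFairNull p.1 p.2 hp
  -- pigeonhole: every path visits some α-class infinitely often
  have hpigeon : ∀ ρ : ℕ → S₁, ∃ t : S₂, ρ ∈ evGF (α ⁻¹' {t}) := by
    intro ρ
    obtain ⟨t, ht⟩ := Finite.exists_infinite_fiber (α ∘ ρ)
    refine ⟨t, fun n => ?_⟩
    have hinf : ((α ∘ ρ) ⁻¹' {t}).Infinite := Set.infinite_coe_iff.1 ht
    obtain ⟨k, hk, hnk⟩ := hinf.exists_gt n
    exact ⟨k, le_of_lt hnk, hk⟩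
  -- conclusion
  have hclimb : ∀ ρ : ℕ → S₁, ρ ∉ N → ∀ b : S₂, b ∈ B → ∀ t : S₂,
      Relation.ReflTransGen step t b → ρ ∈ evGF (α ⁻¹' {t}) → ρ ∈ evF C := by
    intro ρ hρN b hbB t htr
    induction htr using Relation.ReflTransGen.head_induction_on with
    | refl =>
      intro hGF
      obtain ⟨k, _, hk⟩ := hGF 0
      have hk' : α (ρ k) = b := hk
      exact ⟨k, show α (ρ k) ∈ B from hk' ▸ hbB⟩
    | head h' htr' ih =>
      rename_i a c
      intro hGF
      have hc : ρ ∈ evGF (α ⁻¹' {c}) := by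
        by_contra hcc
        exact hρN (Set.mem_iUnion.2 ⟨(a, c), Set.mem_iUnion.2 ⟨h', ⟨hGF, hcc⟩⟩⟩)
      exact ih hc
  have hsubN : (evF C ∪ evF (avoid P₁ C))ᶜ ⊆ N := by
    intro ρ hρ
    by_contra hρN
    apply hρ
    obtain ⟨t, hGF⟩ := hpigeon ρ
    by_cases hRt : t ∈ R
    · left
      obtain ⟨b, hbB, htr⟩ := hRt
      exact hclimb ρ hρN b hbB t htr hGF
    · right
      obtain ⟨k, _, hk⟩ := hGF 0
      have hk' : α (ρ k) = t := hk
      exact ⟨k, havoid (show α (ρ k) ∈ Rᶜ from hk' ▸ hRt)⟩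
  have h0 : P₁ μ (evF C ∪ evF (avoid P₁ C))ᶜ = 0 := measure_mono_null hsubN hNnull
  have h1 : (1 : ℝ≥0∞) ≤ P₁ μ (evF C ∪ evF (avoid P₁ C)) := by
    calc (1 : ℝ≥0∞) = P₁ μ Set.univ := (measure_univ).symm
    _ = P₁ μ ((evF C ∪ evF (avoid P₁ C)) ∪ (evF C ∪ evF (avoid P₁ C))ᶜ) := by
        rw [Set.union_compl_self]
    _ ≤ P₁ μ (evF C ∪ evF (avoid P₁ C)) + P₁ μ (evF C ∪ evF (avoid P₁ C))ᶜ :=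
        measure_union_le _ _
    _ = P₁ μ (evF C ∪ evF (avoid P₁ C)) := by rw [h0, add_zero]
  exact le_antisymm prob_le_one h1

end STS
end

section
/- Let T₁ = (S₁,Σ₁,κ₁) and T₂ = (S₂,Σ₂,κ₂) be STSs and α : S₁ → S₂ measurable, with T₂ an α-abstraction of T₁. If T₁ is decisive w.r.t. every α-closed set from every initial probability measure (for every B ∈ Σ₂ and every probability measure μ on S₁, Prob^{T₁}_μ(F α⁻¹(B) ∪ F C̃) = 1, where C̃ is the avoid-set of α⁻¹(B) in T₁), then T₂ is a sound α-abstraction of T₁: for every probability measure μ on S₁ and every B ∈ Σ₂, Prob^{T₂}_{α_# μ}(F B) = 1 implies Prob^{T₁}_μ(F α⁻¹(B)) = 1. -/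
open MeasureTheory ProbabilityTheory ENNReal Filter Topology

namespace STS

variable {S : Type*} [MeasurableSpace S]

section Auxiliary

variable {κ : Kernel S S}

lemma Omega_apply [IsMarkovKernel κ] (μ : Measure S) {A : Set S} (hA : MeasurableSet A) :
    Omega κ μ A = ∫⁻ s, κ s A ∂μ :=
  Measure.bind_apply hA κ.measurable.aemeasurable

lemma Omega_dirac [IsMarkovKernel κ] (s : S) : Omega κ (Measure.dirac s) = κ s :=
  Measure.dirac_bind κ.measurable s

instance Omega_finite [IsMarkovKernel κ] (μ : Measure S) [IsFiniteMeasure μ] :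
    IsFiniteMeasure (Omega κ μ) := by
  constructor
  rw [Omega_apply μ MeasurableSet.univ]
  simp only [measure_univ]
  rw [lintegral_one]
  exact measure_lt_top μ _

lemma omegaIter_finite [IsMarkovKernel κ] (μ : Measure S) [IsFiniteMeasure μ] (n : ℕ) :
    IsFiniteMeasure ((Omega κ)^[n] μ) := by
  induction n with
  | zero => simpa using ‹_›
  | succ n ih => rw [Function.iterate_succ_apply']; exact @Omega_finite _ _ _ _ _ ih

lemma omegaIter_aux [IsMarkovKernel κ] (k : ℕ) {C : Set S} (hC : MeasurableSet C) :
    Measurable (fun s => (Omega κ)^[k] (Measure.dirac s) C) ∧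
    ∀ ν : Measure S, (Omega κ)^[k] ν C = ∫⁻ s, (Omega κ)^[k] (Measure.dirac s) C ∂ν := by
  induction k with
  | zero =>
    simp only [Function.iterate_zero, id_eq]
    constructor
    · simp only [Measure.dirac_apply' _ hC]
      exact measurable_one.indicator hC
    · intro ν
      simp only [Measure.dirac_apply' _ hC]
      rw [lintegral_indicator_one hC]
  | succ k ih =>
    have hdir : ∀ s, (Omega κ)^[k+1] (Measure.dirac s) C
        = ∫⁻ t, (Omega κ)^[k] (Measure.dirac t) C ∂κ s := by
      intro s
      rw [Function.iterate_succ_apply, Omega_dirac, ih.2 (κ s)]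
    constructor
    · simp only [hdir]
      exact Measurable.lintegral_kernel ih.1
    · intro ν
      rw [Function.iterate_succ_apply, ih.2 (Omega κ ν), Omega,
        Measure.lintegral_bind κ.measurable.aemeasurable ih.1.aemeasurable]
      simp only [hdir]

lemma omegaIter_dirac_meas [IsMarkovKernel κ] (k : ℕ) {C : Set S} (hC : MeasurableSet C) :
    Measurable (fun s => (Omega κ)^[k] (Measure.dirac s) C) := (omegaIter_aux k hC).1

lemma omegaIter_lintegral [IsMarkovKernel κ] (k : ℕ) {C : Set S} (hC : MeasurableSet C)
    (ν : Measure S) :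
    (Omega κ)^[k] ν C = ∫⁻ s, (Omega κ)^[k] (Measure.dirac s) C ∂ν := (omegaIter_aux k hC).2 ν

/-- The integrand representation of cylinder probabilities. -/
noncomputable def cylFun (κ : Kernel S S) : ℕ → (ℕ → Set S) → S → ℝ≥0∞
  | 0, A => (A 0).indicator 1
  | n + 1, A => (A 0).indicator (fun s => ∫⁻ t, cylFun κ n (fun i => A (i + 1)) t ∂κ s)

lemma cylFun_measurable [IsMarkovKernel κ] (n : ℕ) (A : ℕ → Set S)
    (hA : ∀ i, MeasurableSet (A i)) : Measurable (cylFun κ n A) := by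
  induction n generalizing A with
  | zero => exact measurable_one.indicator (hA 0)
  | succ n ih =>
    exact (Measurable.lintegral_kernel (ih _ (fun i => hA (i + 1)))).indicator (hA 0)

lemma cylProb_eq_lintegral [IsMarkovKernel κ] (n : ℕ) (μ : Measure S) (A : ℕ → Set S)
    (hA : ∀ i, MeasurableSet (A i)) :
    cylProb κ n μ A = ∫⁻ s, cylFun κ n A s ∂μ := by
  induction n generalizing μ A with
  | zero =>
    simp only [cylProb, cylFun]
    rw [lintegral_indicator_one (hA 0)]
  | succ n ih =>
    simp only [cylProb, cylFun]
    rw [lintegral_indicator (hA 0)]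
    exact lintegral_congr fun s => ih (κ s) _ (fun i => hA (i + 1))

lemma cylProb_step [IsMarkovKernel κ] (n : ℕ) (μ : Measure S) (A : ℕ → Set S)
    (hA : ∀ i, MeasurableSet (A i)) :
    cylProb κ (n + 1) μ A = cylProb κ n (Omega κ (μ.restrict (A 0))) (fun i => A (i + 1)) := by
  rw [cylProb_eq_lintegral n _ _ (fun i => hA (i + 1)), Omega,
    Measure.lintegral_bind κ.measurable.aemeasurable (cylFun_measurable n _ (fun i => hA (i + 1))).aemeasurable]
  simp only [cylProb]
  exact lintegral_congr fun s => cylProb_eq_lintegral n (κ s) _ (fun i => hA (i + 1))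

/-- The "evolve one step restricted to `E`" sequence of measures. -/
noncomputable def rSeq (κ : Kernel S S) (E : Set S) (μ : Measure S) : ℕ → Measure S :=
  fun n => (fun m => Omega κ (m.restrict E))^[n] μ

lemma rSeq_univ [IsMarkovKernel κ] (μ : Measure S) (n : ℕ) :
    rSeq κ Set.univ μ n = (Omega κ)^[n] μ := by
  have h : (fun m : Measure S => Omega κ (m.restrict Set.univ)) = Omega κ := by
    funext m; rw [Measure.restrict_univ]
  rw [rSeq, h]

lemma rSeq_finite [IsMarkovKernel κ] (E : Set S) (μ : Measure S) [IsFiniteMeasure μ] (n : ℕ) :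
    IsFiniteMeasure (rSeq κ E μ n) := by
  induction n with
  | zero => simpa [rSeq] using ‹_›
  | succ n ih =>
    have h : rSeq κ E μ (n + 1) = Omega κ ((rSeq κ E μ n).restrict E) :=
      Function.iterate_succ_apply' _ n μ
    rw [h]
    haveI := ih
    exact inferInstance

lemma cylProb_prefix [IsMarkovKernel κ] (E : Set S) (n m : ℕ) (μ : Measure S) (A : ℕ → Set S)
    (hA : ∀ i, MeasurableSet (A i)) (hpre : ∀ i < n, A i = E) :
    cylProb κ (n + m) μ A = cylProb κ m (rSeq κ E μ n) (fun i => A (i + n)) := by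
  induction n generalizing μ A with
  | zero => simp [rSeq]
  | succ n ih =>
    rw [show n + 1 + m = (n + m) + 1 by omega, cylProb_step (n + m) μ A hA,
      hpre 0 (by omega)]
    rw [ih (Omega κ (μ.restrict E)) (fun i => A (i + 1)) (fun i => hA (i + 1))
      (fun i hi => hpre (i + 1) (by omega))]
    have hseq : rSeq κ E (Omega κ (μ.restrict E)) n = rSeq κ E μ (n + 1) :=
      (Function.iterate_succ_apply _ n μ).symm
    rw [hseq]
    rfl

/-! Path-measure facts. -/

lemma cylinder_coord (k : ℕ) (B : Set S) :
    {ρ : ℕ → S | ∀ i ≤ k, ρ i ∈ (fun i => if i = k then B else Set.univ) i}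
      = {ρ : ℕ → S | ρ k ∈ B} := by
  ext ρ
  simp only [Set.mem_setOf_eq]
  constructor
  · intro h
    have := h k le_rfl
    simpa using this
  · intro h i _
    by_cases hik : i = k
    · simpa [hik] using h
    · simp [hik]

lemma pathMeasure_coord [IsMarkovKernel κ] {P : Measure S → Measure (ℕ → S)}
    (hP : IsPathMeasure κ P) (μ : Measure S) (hμ : IsProbabilityMeasure μ) (k : ℕ)
    {B : Set S} (hB : MeasurableSet B) :
    P μ {ρ : ℕ → S | ρ k ∈ B} = (Omega κ)^[k] μ B := by
  have hA : ∀ i, MeasurableSet ((fun i => if i = k then B else Set.univ) i) := fun i => by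
    by_cases h : i = k <;> simp [h, hB]
  rw [← cylinder_coord k B, (hP μ hμ).2 k _ hA]
  have h := cylProb_prefix (κ := κ) Set.univ k 0 μ _ hA (fun i hi => by simp [Nat.ne_of_lt hi])
  rw [show k + 0 = k from rfl] at h
  rw [h, rSeq_univ]
  simp [cylProb]

lemma evF_eq_iUnion (B : Set S) : evF B = ⋃ k, {ρ : ℕ → S | ρ k ∈ B} := by
  ext ρ; simp [evF]

lemma evF_measurable {B : Set S} (hB : MeasurableSet B) : MeasurableSet (evF B) := by
  rw [evF_eq_iUnion]
  exact MeasurableSet.iUnion fun k => (measurable_pi_apply k) hB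

lemma evF_null_iff [IsMarkovKernel κ] {P : Measure S → Measure (ℕ → S)}
    (hP : IsPathMeasure κ P) (μ : Measure S) (hμ : IsProbabilityMeasure μ)
    {B : Set S} (hB : MeasurableSet B) :
    P μ (evF B) = 0 ↔ ∀ k, (Omega κ)^[k] μ B = 0 := by
  constructor
  · intro h k
    rw [← pathMeasure_coord hP μ hμ k hB]
    exact measure_mono_null (show {ρ : ℕ → S | ρ k ∈ B} ⊆ evF B from fun ρ hρ => ⟨k, hρ⟩) h
  · intro h
    rw [evF_eq_iUnion]
    exact measure_iUnion_null fun k => by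
      rw [pathMeasure_coord hP μ hμ k hB]; exact h k

lemma avoid_eq_iInter [IsMarkovKernel κ] {P : Measure S → Measure (ℕ → S)}
    (hP : IsPathMeasure κ P) {B : Set S} (hB : MeasurableSet B) :
    avoid P B = ⋂ k, {s | (Omega κ)^[k] (Measure.dirac s) B = 0} := by
  ext s
  simp only [avoid, Set.mem_setOf_eq, Set.mem_iInter]
  exact evF_null_iff hP _ inferInstance hB

lemma avoid_measurable [IsMarkovKernel κ] {P : Measure S → Measure (ℕ → S)}
    (hP : IsPathMeasure κ P) {B : Set S} (hB : MeasurableSet B) :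
    MeasurableSet (avoid P B) := by
  rw [avoid_eq_iInter hP hB]
  exact MeasurableSet.iInter fun k =>
    (omegaIter_dirac_meas k hB) (measurableSet_singleton 0)

lemma avoid_spec [IsMarkovKernel κ] {P : Measure S → Measure (ℕ → S)}
    (hP : IsPathMeasure κ P) {B : Set S} (hB : MeasurableSet B) {s : S}
    (hs : s ∈ avoid P B) (k : ℕ) :
    (Omega κ)^[k] (Measure.dirac s) B = 0 := by
  rw [avoid_eq_iInter hP hB] at hs
  exact Set.mem_iInter.mp hs k

/-! Qualitative-equivalence transfer. -/

lemma qualEquiv_trans {T : Type*} [MeasurableSpace T] {a b c : Measure T}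
    (h1 : QualEquiv a b) (h2 : QualEquiv b c) : QualEquiv a c :=
  fun A hA => (h1 A hA).trans (h2 A hA)

lemma qualEquiv_restrict {T : Type*} [MeasurableSpace T] {m₁ m₂ : Measure T}
    (h : QualEquiv m₁ m₂) {E : Set T} (hE : MeasurableSet E) :
    QualEquiv (m₁.restrict E) (m₂.restrict E) := by
  intro A hA
  rw [Measure.restrict_apply hA, Measure.restrict_apply hA]
  exact h _ (hA.inter hE)

lemma qualEquiv_omega {T : Type*} [MeasurableSpace T] (κ' : Kernel T T) [IsMarkovKernel κ']
    {m₁ m₂ : Measure T} (h : QualEquiv m₁ m₂) :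
    QualEquiv (Omega κ' m₁) (Omega κ' m₂) := by
  intro A hA
  have key : ∀ m : Measure T, (Omega κ' m A = 0 ↔ m {u | κ' u A ≠ 0} = 0) := by
    intro m
    rw [Omega_apply m hA, lintegral_eq_zero_iff (κ'.measurable_coe hA),
      Filter.EventuallyEq, ae_iff]
    simp only [Pi.zero_apply]
  rw [key, key]
  refine h _ ?_
  have hset : {u | κ' u A ≠ 0} = (fun u => κ' u A) ⁻¹' ({0}ᶜ) := by
    ext u; simp
  rw [hset]
  exact (κ'.measurable_coe hA) (measurableSet_singleton 0).compl

variable {S₁ S₂ : Type*} [MeasurableSpace S₁] [MeasurableSpace S₂]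
  {κ₁ : Kernel S₁ S₁} {κ₂ : Kernel S₂ S₂} {α : S₁ → S₂}

lemma habs_finite [IsMarkovKernel κ₁] [IsMarkovKernel κ₂]
    (hα : Measurable α) (habs : IsAbstraction κ₁ κ₂ α)
    (m : Measure S₁) [IsFiniteMeasure m] :
    QualEquiv (Measure.map α (Omega κ₁ m)) (Omega κ₂ (Measure.map α m)) := by
  rcases eq_or_ne (m Set.univ) 0 with h0 | h0
  · have hm0 : m = 0 := Measure.measure_univ_eq_zero.mp h0
    subst hm0
    rw [Measure.map_zero, Omega, Omega, Measure.bind_zero_left, Measure.bind_zero_left,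
      Measure.map_zero]
    exact fun A hA => Iff.rfl
  · set c := m Set.univ with hc
    have hc' : c ≠ ⊤ := measure_ne_top m _
    set p : Measure S₁ := c⁻¹ • m with hp
    have hprob : IsProbabilityMeasure p := by
      constructor
      rw [hp, Measure.smul_apply, smul_eq_mul, ← hc]
      exact ENNReal.inv_mul_cancel h0 hc'
    have hm : m = c • p := by
      rw [hp, smul_smul, ENNReal.mul_inv_cancel h0 hc', one_smul]
    intro A hA
    have h1 : Measure.map α (Omega κ₁ m) A = c * Measure.map α (Omega κ₁ p) A := by
      rw [Measure.map_apply hα hA, Measure.map_apply hα hA,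
        Omega_apply _ (hα hA), Omega_apply _ (hα hA), hm, lintegral_smul_measure, smul_eq_mul]
    have h2 : Omega κ₂ (Measure.map α m) A = c * Omega κ₂ (Measure.map α p) A := by
      rw [hm, Measure.map_smul, Omega_apply _ hA, Omega_apply _ hA, lintegral_smul_measure, smul_eq_mul]
    rw [h1, h2, mul_eq_zero, mul_eq_zero]
    have h3 := habs p hprob A hA
    constructor
    · rintro (h | h)
      · exact absurd h h0
      · exact Or.inr (h3.mp h)
    · rintro (h | h)
      · exact absurd h h0
      · exact Or.inr (h3.mpr h)

lemma qe_iter [IsMarkovKernel κ₁] [IsMarkovKernel κ₂]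
    (hα : Measurable α) (habs : IsAbstraction κ₁ κ₂ α)
    (m : Measure S₁) [IsFiniteMeasure m] (k : ℕ) :
    QualEquiv (Measure.map α ((Omega κ₁)^[k] m)) ((Omega κ₂)^[k] (Measure.map α m)) := by
  induction k with
  | zero => exact fun A hA => Iff.rfl
  | succ k ih =>
    rw [Function.iterate_succ_apply', Function.iterate_succ_apply']
    haveI := omegaIter_finite m k (κ := κ₁)
    exact qualEquiv_trans (habs_finite hα habs _) (qualEquiv_omega κ₂ ih)

lemma qe_rseq [IsMarkovKernel κ₁] [IsMarkovKernel κ₂]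
    (hα : Measurable α) (habs : IsAbstraction κ₁ κ₂ α)
    (μ : Measure S₁) [IsFiniteMeasure μ] {B : Set S₂} (hB : MeasurableSet B) (n : ℕ) :
    QualEquiv (Measure.map α (rSeq κ₁ (α ⁻¹' B)ᶜ μ n)) (rSeq κ₂ Bᶜ (Measure.map α μ) n) := by
  induction n with
  | zero => exact fun A hA => Iff.rfl
  | succ n ih =>
    have h1 : rSeq κ₁ (α ⁻¹' B)ᶜ μ (n + 1)
        = Omega κ₁ ((rSeq κ₁ (α ⁻¹' B)ᶜ μ n).restrict (α ⁻¹' B)ᶜ) :=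
      Function.iterate_succ_apply' _ n μ
    have h2 : rSeq κ₂ Bᶜ (Measure.map α μ) (n + 1)
        = Omega κ₂ ((rSeq κ₂ Bᶜ (Measure.map α μ) n).restrict Bᶜ) :=
      Function.iterate_succ_apply' _ n _
    rw [h1, h2]
    haveI := rSeq_finite (α ⁻¹' B)ᶜ μ n (κ := κ₁)
    refine qualEquiv_trans (habs_finite hα habs _) ?_
    have h3 : Measure.map α ((rSeq κ₁ (α ⁻¹' B)ᶜ μ n).restrict (α ⁻¹' B)ᶜ)
        = (Measure.map α (rSeq κ₁ (α ⁻¹' B)ᶜ μ n)).restrict Bᶜ := by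
      rw [Measure.restrict_map hα hB.compl, Set.preimage_compl]
    rw [h3]
    exact qualEquiv_omega κ₂ (qualEquiv_restrict ih hB.compl)

end Auxiliary


/-- if `T₁` is decisive w.r.t. every `α`-closed set from every initial
probability measure, then `T₂` is a sound `α`-abstraction of `T₁`. -/
theorem statement_14 {S₁ S₂ : Type*} [MeasurableSpace S₁] [MeasurableSpace S₂]
    (κ₁ : Kernel S₁ S₁) [IsMarkovKernel κ₁] (κ₂ : Kernel S₂ S₂) [IsMarkovKernel κ₂]
    (P₁ : Measure S₁ → Measure (ℕ → S₁)) (hP₁ : IsPathMeasure κ₁ P₁)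
    (P₂ : Measure S₂ → Measure (ℕ → S₂)) (hP₂ : IsPathMeasure κ₂ P₂)
    (α : S₁ → S₂) (hα : Measurable α) (habs : IsAbstraction κ₁ κ₂ α)
    (hdec : ∀ B : Set S₂, MeasurableSet B → ∀ μ : Measure S₁, IsProbabilityMeasure μ →
      Decisive P₁ μ (α ⁻¹' B)) :
    ∀ μ : Measure S₁, IsProbabilityMeasure μ → ∀ B : Set S₂, MeasurableSet B →
      P₂ (μ.map α) (evF B) = 1 → P₁ μ (evF (α ⁻¹' B)) = 1 := by
  intro μ hμ B hB hreach
  classical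
  by_contra hne
  have hCmeas : MeasurableSet (α ⁻¹' B) := hα hB
  haveI hμ' : IsProbabilityMeasure (μ.map α) := Measure.isProbabilityMeasure_map hα.aemeasurable
  haveI hprob1 := (hP₁ μ hμ).1
  haveI hprob2 := (hP₂ _ hμ').1
  set C := α ⁻¹' B with hCdef
  set Ct := avoid P₁ C with hCtdef
  have hCtmeas : MeasurableSet Ct := avoid_measurable hP₁ hCmeas
  set Bt := avoid P₂ B with hBtdef
  have hBtmeas : MeasurableSet Bt := avoid_measurable hP₂ hB
  -- Step 1: positive probability of reaching `Ct` while avoiding `C`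
  have hdecC : P₁ μ (evF C ∪ evF Ct) = 1 := hdec B hB μ hμ
  have hpos : P₁ μ (evF Ct \ evF C) ≠ 0 := by
    intro h0
    apply hne
    have h1 : (1 : ℝ≥0∞) ≤ P₁ μ (evF C) := by
      calc (1 : ℝ≥0∞) = P₁ μ (evF C ∪ evF Ct) := hdecC.symm
        _ = P₁ μ (evF C ∪ (evF Ct \ evF C)) := by rw [Set.union_diff_self]
        _ ≤ P₁ μ (evF C) + P₁ μ (evF Ct \ evF C) := measure_union_le _ _
        _ = P₁ μ (evF C) := by rw [h0, add_zero]
    exact le_antisymm prob_le_one h1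
  -- Step 2: cover by cylinders "avoid `C` up to time `n`, be in `Ct` at time `n`"
  set A1 : ℕ → ℕ → Set S₁ := fun n i => if i = n then Cᶜ ∩ Ct else Cᶜ with hA1def
  have hA1meas : ∀ n i, MeasurableSet (A1 n i) := fun n i => by
    simp only [hA1def]
    split_ifs
    · exact hCmeas.compl.inter hCtmeas
    · exact hCmeas.compl
  have hcov : evF Ct \ evF C ⊆ ⋃ n, {ρ : ℕ → S₁ | ∀ i ≤ n, ρ i ∈ A1 n i} := by
    rintro ρ ⟨⟨n, hn⟩, hnc⟩
    refine Set.mem_iUnion.mpr ⟨n, fun i hi => ?_⟩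
    have hiC : ρ i ∈ Cᶜ := fun h => hnc ⟨i, h⟩
    simp only [hA1def]
    split_ifs with h
    · exact ⟨hiC, h ▸ hn⟩
    · exact hiC
  obtain ⟨n, hn0⟩ : ∃ n, P₁ μ {ρ : ℕ → S₁ | ∀ i ≤ n, ρ i ∈ A1 n i} ≠ 0 := by
    by_contra hall
    push_neg at hall
    exact hpos (measure_mono_null hcov (measure_iUnion_null hall))
  set a := rSeq κ₁ Cᶜ μ with hadef
  have han : P₁ μ {ρ : ℕ → S₁ | ∀ i ≤ n, ρ i ∈ A1 n i} = a n (Cᶜ ∩ Ct) := by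
    rw [(hP₁ μ hμ).2 n (A1 n) (hA1meas n)]
    have h := cylProb_prefix (κ := κ₁) Cᶜ n 0 μ (A1 n) (hA1meas n)
      (fun i hi => by simp only [hA1def]; rw [if_neg (Nat.ne_of_lt hi)])
    rw [show n + 0 = n from rfl] at h
    rw [h]
    simp only [cylProb, hadef, hA1def, Nat.zero_add, if_pos rfl]
  rw [han] at hn0
  haveI hafin : IsFiniteMeasure (a n) := rSeq_finite _ _ _
  set τ := (a n).restrict (Cᶜ ∩ Ct) with hτdef
  have hτuniv : τ Set.univ = a n (Cᶜ ∩ Ct) := Measure.restrict_apply_univ _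
  -- Step 3: from `τ` the concrete system never visits `C`
  have hτC : ∀ k, (Omega κ₁)^[k] τ C = 0 := by
    intro k
    rw [omegaIter_lintegral k hCmeas τ,
      lintegral_eq_zero_iff (omegaIter_dirac_meas k hCmeas)]
    filter_upwards [ae_restrict_mem (hCmeas.compl.inter hCtmeas)] with s hs
    simpa using avoid_spec hP₁ hCmeas hs.2 k
  -- Step 4: transfer to the abstract system
  have hτB : ∀ k, (Omega κ₂)^[k] (Measure.map α τ) B = 0 := by
    intro k
    refine (qe_iter hα habs τ k B hB).mp ?_
    rw [Measure.map_apply hα hB]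
    exact hτC k
  -- Step 5: the `α`-image of `τ` is carried by the abstract avoid set `Bt`
  have hmapτBt : Measure.map α τ Bt ≠ 0 := by
    have hcomp : Measure.map α τ Btᶜ = 0 := by
      have hset : Btᶜ = ⋃ k, {u | (Omega κ₂)^[k] (Measure.dirac u) B ≠ 0} := by
        rw [hBtdef, avoid_eq_iInter hP₂ hB, Set.compl_iInter]
        ext u
        simp
      rw [hset]
      refine measure_iUnion_null fun k => ?_
      have hint : ∫⁻ u, (Omega κ₂)^[k] (Measure.dirac u) B ∂(Measure.map α τ) = 0 := by
        rw [← omegaIter_lintegral k hB]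
        exact hτB k
      have hae := (lintegral_eq_zero_iff (omegaIter_dirac_meas k hB)).mp hint
      rw [Filter.EventuallyEq, ae_iff] at hae
      simpa using hae
    intro h0
    apply hn0
    have huniv : Measure.map α τ Set.univ = τ Set.univ := by
      rw [Measure.map_apply hα MeasurableSet.univ, Set.preimage_univ]
    have hle : τ Set.univ ≤ Measure.map α τ Bt + Measure.map α τ Btᶜ := by
      rw [← huniv]
      calc Measure.map α τ Set.univ = Measure.map α τ (Bt ∪ Btᶜ) := by
            rw [Set.union_compl_self]
        _ ≤ _ := measure_union_le _ _
    rw [h0, hcomp, add_zero, hτuniv] at hle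
    exact le_zero_iff.mp hle
  have hapos : a n (α ⁻¹' (Bᶜ ∩ Bt)) ≠ 0 := by
    intro h0
    apply hmapτBt
    rw [Measure.map_apply hα hBtmeas, hτdef, Measure.restrict_apply (hα hBtmeas)]
    refine measure_mono_null ?_ h0
    intro s hs
    exact ⟨hs.2.1, hs.1⟩
  -- Step 6: transfer positivity to the abstract restricted evolution
  set b := rSeq κ₂ Bᶜ (μ.map α) with hbdef
  have hbn : b n (Bᶜ ∩ Bt) ≠ 0 := by
    intro h0
    apply hapos
    have h := (qe_rseq hα habs μ hB n (Bᶜ ∩ Bt) (hB.compl.inter hBtmeas)).mpr h0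
    rwa [Measure.map_apply hα (hB.compl.inter hBtmeas)] at h
  -- Step 7: the abstract cylinder event
  set A2 : ℕ → Set S₂ := fun i => if i = n then Bᶜ ∩ Bt else Bᶜ with hA2def
  have hA2meas : ∀ i, MeasurableSet (A2 i) := fun i => by
    simp only [hA2def]
    split_ifs
    · exact hB.compl.inter hBtmeas
    · exact hB.compl
  set G := {ρ : ℕ → S₂ | ∀ i ≤ n, ρ i ∈ A2 i} with hGdef
  have hG : P₂ (μ.map α) G = b n (Bᶜ ∩ Bt) := by
    rw [hGdef, (hP₂ _ hμ').2 n A2 hA2meas]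
    have h := cylProb_prefix (κ := κ₂) Bᶜ n 0 (μ.map α) A2 hA2meas
      (fun i hi => by simp only [hA2def]; rw [if_neg (Nat.ne_of_lt hi)])
    rw [show n + 0 = n from rfl] at h
    rw [h]
    simp only [cylProb, hbdef, hA2def, Nat.zero_add, if_pos rfl]
  -- Step 8: continuation cylinders are null
  set U : ℕ → ℕ → Set S₂ := fun j i =>
    if i = n then Bᶜ ∩ Bt else if i = n + (j + 1) then B
      else if i < n then Bᶜ else Set.univ with hUdef
  have hUmeas : ∀ j i, MeasurableSet (U j i) := fun j i => by
    simp only [hUdef]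
    split_ifs
    · exact hB.compl.inter hBtmeas
    · exact hB
    · exact hB.compl
    · exact MeasurableSet.univ
  have hW : ∀ j : ℕ,
      P₂ (μ.map α) {ρ : ℕ → S₂ | ∀ i ≤ n + (j + 1), ρ i ∈ U j i} = 0 := by
    intro j
    rw [(hP₂ _ hμ').2 (n + (j + 1)) (U j) (hUmeas j)]
    rw [cylProb_prefix (κ := κ₂) Bᶜ n (j + 1) (μ.map α) (U j) (hUmeas j)
      (fun i hi => by
        simp only [hUdef]
        rw [if_neg (by omega), if_neg (by omega), if_pos hi])]
    rw [cylProb_step (κ := κ₂) j _ _ (fun i => hUmeas j (i + n))]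
    have h0n : U j (0 + n) = Bᶜ ∩ Bt := by
      simp only [hUdef, Nat.zero_add, if_pos rfl]
    rw [h0n]
    have h2 := cylProb_prefix (κ := κ₂) Set.univ j 0
      (Omega κ₂ ((rSeq κ₂ Bᶜ (μ.map α) n).restrict (Bᶜ ∩ Bt)))
      (fun i => U j (i + 1 + n)) (fun i => hUmeas j (i + 1 + n))
      (fun i hi => by
        simp only [hUdef]
        rw [if_neg (by omega), if_neg (by omega), if_neg (by omega)])
    rw [show j + 0 = j from rfl] at h2
    rw [h2, rSeq_univ]
    simp only [cylProb]
    have hlast : U j (0 + j + 1 + n) = B := by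
      simp only [hUdef]
      rw [if_neg (by omega), if_pos (by omega)]
    rw [hlast, ← Function.iterate_succ_apply (Omega κ₂) j]
    rw [omegaIter_lintegral (j + 1) hB,
      lintegral_eq_zero_iff (omegaIter_dirac_meas (j + 1) hB)]
    filter_upwards [ae_restrict_mem (hB.compl.inter hBtmeas)] with u hu
    simpa using avoid_spec hP₂ hB hu.2 (j + 1)
  -- Step 9: conclude
  have hGF : P₂ (μ.map α) (G ∩ evF B) = 0 := by
    refine measure_mono_null ?_ (measure_iUnion_null hW)
    rintro ρ ⟨hρG, k, hk⟩
    have hρG' : ∀ i ≤ n, ρ i ∈ A2 i := hρG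
    have hBc : ∀ i ≤ n, ρ i ∈ Bᶜ := by
      intro i hi
      have h := hρG' i hi
      simp only [hA2def] at h
      split_ifs at h with hin
      · exact h.1
      · exact h
    have hkn : n < k := by
      by_contra hle
      push_neg at hle
      exact (hBc k hle) hk
    have hnBt : ρ n ∈ Bᶜ ∩ Bt := by
      have h := hρG' n le_rfl
      simpa only [hA2def, if_pos rfl] using h
    refine Set.mem_iUnion.mpr ⟨k - n - 1, fun i hi => ?_⟩
    have hkeq : n + (k - n - 1 + 1) = k := by omega
    simp only [hUdef]
    split_ifs with h1 h2 h3
    · exact h1 ▸ hnBt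
    · rw [h2, hkeq]; exact hk
    · exact hBc i (le_of_lt h3)
    · trivial
  have hcompl : P₂ (μ.map α) (evF B)ᶜ = 0 := by
    rw [measure_compl (evF_measurable hB) (measure_ne_top _ _), measure_univ, hreach,
      tsub_self]
  have hle : P₂ (μ.map α) G ≤ 0 := by
    calc P₂ (μ.map α) G ≤ P₂ (μ.map α) ((G ∩ evF B) ∪ (evF B)ᶜ) := by
          refine measure_mono fun ρ hρ => ?_
          by_cases h : ρ ∈ evF B
          · exact Or.inl ⟨hρ, h⟩
          · exact Or.inr h
      _ ≤ P₂ (μ.map α) (G ∩ evF B) + P₂ (μ.map α) (evF B)ᶜ := measure_union_le _ _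
      _ = 0 := by rw [hGF, hcompl, add_zero]
  rw [hG] at hle
  exact hbn (le_zero_iff.mp hle)


end STS
end
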